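/- arXiv:1510.05455 — 3 statements merged into one kernel-verified Lean document; each statement's English description precedes it below -/
import Mathlib

section
/- Let v be a radial weight satisfying M₂(v) = sup_{0<r<1} (∫₀^r v̂(s)/(1-s)⁴ ds)^{1/2} (∫_r¹ (1-s)²/v̂(s) ds)^{1/2} < ∞. Then sup_{0≤r<1} (∫₀^r v(s)/(1-s)³ ds)^{1/2} · (∫_r¹ (1-s)²/v̂(s) ds)^{1/2} < ∞. -/
open MeasureTheory Real Set Filter

noncomputable section

/-- `hatw v r = ∫_r^1 v(s) ds`. -/
def hatw (v : ℝ → ℝ) (r : ℝ) : ℝ := ∫ s in r..1, v s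

/-- A radial weight: measurable, positive on `[0,1)`, integrable on `(0,1)`. -/
def RadialWeight (v : ℝ → ℝ) : Prop :=
  Measurable v ∧ (∀ r ∈ Set.Ico (0:ℝ) 1, 0 < v r) ∧
    MeasureTheory.IntegrableOn v (Set.Ioo 0 1)

/-- Membership in the class `D̂`. -/
def DoublingD (v : ℝ → ℝ) : Prop :=
  ∃ C : ℝ, 1 ≤ C ∧ ∀ r ∈ Set.Ico (0:ℝ) 1, hatw v r ≤ C * hatw v ((1+r)/2)

/-- Squared Dirichlet-type norm `‖f‖_{D_v}^2`. -/
def DvSq (v : ℝ → ℝ) (f : ℂ → ℂ) : ENNReal :=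
  (‖f 0‖₊ : ENNReal)^2 +
    (ENNReal.ofReal Real.pi)⁻¹ *
      ∫⁻ z in Metric.ball (0:ℂ) 1, (‖deriv f z‖₊ : ENNReal)^2 * ENNReal.ofReal (v ‖z‖)

/-- The Muckenhoupt type quantity `M₁(v)`. -/
def M1v (v : ℝ → ℝ) : ENNReal :=
  ⨆ r ∈ Set.Ioo (0:ℝ) 1,
    (∫⁻ s in Set.Ioo r 1, ENNReal.ofReal (hatw v s / (1-s)^2)) ^ (1/2 : ℝ) *
    (∫⁻ s in Set.Ioo (0:ℝ) r, ENNReal.ofReal (1 / hatw v s)) ^ (1/2 : ℝ)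

/-- The Muckenhoupt type quantity `M₂(v)`. -/
def M2v (v : ℝ → ℝ) : ENNReal :=
  ⨆ r ∈ Set.Ioo (0:ℝ) 1,
    (∫⁻ s in Set.Ioo (0:ℝ) r, ENNReal.ofReal (hatw v s / (1-s)^4)) ^ (1/2 : ℝ) *
    (∫⁻ s in Set.Ioo r 1, ENNReal.ofReal ((1-s)^2 / hatw v s)) ^ (1/2 : ℝ)

/-- The moment `v_x = ∫_0^1 s^x v(s) ds`. -/
def vx (v : ℝ → ℝ) (x : ℕ) : ℝ := ∫ s in (0:ℝ)..1, s^x * v s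

/-- `M_∞(s,f)`, the maximum of `|f|` on the circle of radius `s`. -/
def Minf (f : ℂ → ℂ) (s : ℝ) : ℝ := sSup ((fun z => ‖f z‖) '' Metric.sphere (0:ℂ) s)

/-- `M₂(r,h)`. -/
def M2mean (h : ℂ → ℂ) (r : ℝ) : ℝ :=
  Real.sqrt ((2*Real.pi)⁻¹ * ∫ θ in (-Real.pi)..Real.pi, ‖h ((r:ℂ) * Complex.exp (θ * Complex.I))‖^2)

/-- The norm of `B(2,∞)` (with values in `[0,∞]`). -/
def B2infE (g : ℂ → ℂ) : ENNReal :=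
  (‖g 0‖₊ : ENNReal) +
    ⨆ r ∈ Set.Ioo (0:ℝ) 1, ENNReal.ofReal (M2mean (deriv g) r * Real.sqrt (1-r))

/-- The `p`-th power of the norm of `B(2,p)` (with values in `[0,∞]`). -/
def B2pE (p : ℝ) (g : ℂ → ℂ) : ENNReal :=
  ENNReal.ofReal (‖g 0‖ ^ p) +
    ∫⁻ r in Set.Ioo (0:ℝ) 1, ENNReal.ofReal (M2mean (deriv g) r ^ p * (1-r)^(p/2-1))

/-- The generalized Hilbert operator `H_g`. -/
def Hg (g f : ℂ → ℂ) (z : ℂ) : ℂ := ∫ t in Set.Ioo (0:ℝ) 1, f t * deriv g (t * z)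

/-- The Hilbert operator `H` acting on functions on `[0,1)`. -/
def Hop (φ : ℝ → ℂ) (z : ℂ) : ℂ := ∫ t in Set.Ioo (0:ℝ) 1, φ t / (1 - t * z)

/-- The sublinear Hilbert operator `H̃`. -/
def Htil (φ : ℝ → ℂ) (z : ℂ) : ℂ := ∫ t in Set.Ioo (0:ℝ) 1, (‖φ t‖ : ℂ) / (1 - t * z)

/-- Squared norm in `L²_{V̂₂}`. -/
def L2V2sq (v : ℝ → ℝ) (φ : ℝ → ℂ) : ENNReal :=
  ∫⁻ t in Set.Ioo (0:ℝ) 1, (‖φ t‖₊ : ENNReal)^2 * ENNReal.ofReal (hatw v t / (1-t)^2)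

/-- Taylor coefficient `ĝ(k)` of `g` at the origin. -/
def gcoef (g : ℂ → ℂ) (k : ℕ) : ℂ := iteratedDeriv k g 0 / (Nat.factorial k)



section AuxLemmas

variable {v : ℝ → ℝ}

lemma hatw_eq_setIntegral {t : ℝ} (ht : t ≤ 1) :
    hatw v t = ∫ s in Set.Ioo t 1, v s := by
  rw [hatw, intervalIntegral.integral_of_le ht, MeasureTheory.integral_Ioc_eq_integral_Ioo]

lemma hatw_nonneg (hv : RadialWeight v) {t : ℝ} (ht : 0 ≤ t) (ht1 : t ≤ 1) :
    0 ≤ hatw v t := by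
  rw [hatw_eq_setIntegral ht1]
  exact setIntegral_nonneg measurableSet_Ioo fun x hx => (hv.2.1 x ⟨ht.trans hx.1.le, hx.2⟩).le

lemma hatw_anti (hv : RadialWeight v) {a b : ℝ} (ha : 0 ≤ a) (hab : a ≤ b) (hb : b ≤ 1) :
    hatw v b ≤ hatw v a := by
  rw [hatw_eq_setIntegral hb, hatw_eq_setIntegral (hab.trans hb)]
  refine setIntegral_mono_set ?_ ?_ (HasSubset.Subset.eventuallyLE (Set.Ioo_subset_Ioo_left hab))
  · exact hv.2.2.mono_set (Set.Ioo_subset_Ioo_left ha)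
  · exact (ae_restrict_iff' measurableSet_Ioo).2 (ae_of_all _
      fun x hx => (hv.2.1 x ⟨ha.trans hx.1.le, hx.2⟩).le)

lemma hatw_pos (hv : RadialWeight v) {t : ℝ} (ht : t ∈ Set.Ico (0:ℝ) 1) : 0 < hatw v t := by
  rw [hatw_eq_setIntegral ht.2.le]
  have hnn : 0 ≤ᵐ[volume.restrict (Set.Ioo t 1)] v :=
    (ae_restrict_iff' measurableSet_Ioo).2 (ae_of_all _
      fun x hx => (hv.2.1 x ⟨ht.1.trans hx.1.le, hx.2⟩).le)
  have hint : MeasureTheory.IntegrableOn v (Set.Ioo t 1) :=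
    hv.2.2.mono_set (Set.Ioo_subset_Ioo_left ht.1)
  rw [setIntegral_pos_iff_support_of_nonneg_ae hnn hint]
  have hsub : Set.Ioo t 1 ⊆ Function.support v ∩ Set.Ioo t 1 := fun x hx =>
    ⟨(hv.2.1 x ⟨ht.1.trans hx.1.le, hx.2⟩).ne', hx⟩
  calc (0:ENNReal) < volume (Set.Ioo t 1) := by
        rw [Real.volume_Ioo]; exact ENNReal.ofReal_pos.2 (by linarith [ht.2])
    _ ≤ _ := measure_mono hsub

lemma lint_v_le (hv : RadialWeight v) {t r : ℝ} (ht : 0 ≤ t) (ht1 : t < 1) (hr : r ≤ 1) :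
    ∫⁻ s in Set.Ioo t r, ENNReal.ofReal (v s) ≤ ENNReal.ofReal (hatw v t) := by
  have hnn : 0 ≤ᵐ[volume.restrict (Set.Ioo t 1)] v :=
    (ae_restrict_iff' measurableSet_Ioo).2 (ae_of_all _
      fun x hx => (hv.2.1 x ⟨ht.trans hx.1.le, hx.2⟩).le)
  have hint : MeasureTheory.IntegrableOn v (Set.Ioo t 1) :=
    hv.2.2.mono_set (Set.Ioo_subset_Ioo_left ht)
  calc ∫⁻ s in Set.Ioo t r, ENNReal.ofReal (v s)
      ≤ ∫⁻ s in Set.Ioo t 1, ENNReal.ofReal (v s) :=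
        lintegral_mono_set (Set.Ioo_subset_Ioo_right hr)
    _ = ENNReal.ofReal (∫ s in Set.Ioo t 1, v s) :=
        (MeasureTheory.ofReal_integral_eq_lintegral_ofReal hint hnn).symm
    _ = ENNReal.ofReal (hatw v t) := by rw [hatw_eq_setIntegral ht1.le]

lemma keyA (hv : RadialWeight v) {r : ℝ} (hr : r ∈ Set.Ioo (0:ℝ) 1) :
    ∫⁻ s in Set.Ioo (0:ℝ) r, ENNReal.ofReal (v s / (1-s)^3)
      ≤ ENNReal.ofReal (hatw v 0) +
        3 * ∫⁻ s in Set.Ioo (0:ℝ) r, ENNReal.ofReal (hatw v s / (1-s)^4) := by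
  set g : ℝ → ENNReal := fun t => ENNReal.ofReal (((1-t)^4)⁻¹) with hg_def
  have hg_meas : Measurable g :=
    (((measurable_const.sub measurable_id).pow_const 4).inv).ennreal_ofReal
  -- pointwise decomposition
  have step1 : ∀ s ∈ Set.Ioo (0:ℝ) r,
      ENNReal.ofReal (v s / (1-s)^3)
        = ENNReal.ofReal (v s) + 3 * ∫⁻ t in Set.Ioo (0:ℝ) s, ENNReal.ofReal (v s) * g t := by
    intro s hs
    have hs1 : s < 1 := hs.2.trans hr.2
    have h1s : (0:ℝ) < 1 - s := by linarith
    have hvs : 0 ≤ v s := (hv.2.1 s ⟨hs.1.le, hs1⟩).le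
    -- compute the inner real integral
    have hcont : ContinuousOn (fun t : ℝ => ((1-t)^4)⁻¹) (Set.Icc 0 s) := by
      refine ContinuousOn.inv₀ (Continuous.continuousOn (by continuity)) ?_
      intro x hx
      have : (0:ℝ) < 1 - x := by linarith [hx.2]
      positivity
    have hint : MeasureTheory.IntegrableOn (fun t : ℝ => ((1-t)^4)⁻¹) (Set.Ioo 0 s) :=
      (hcont.integrableOn_Icc).mono_set Set.Ioo_subset_Icc_self
    have hJval : ∫ t in Set.Ioo (0:ℝ) s, ((1-t)^4)⁻¹ = (((1-s)^3)⁻¹ - 1)/3 := by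
      rw [← MeasureTheory.integral_Ioc_eq_integral_Ioo,
        ← intervalIntegral.integral_of_le hs.1.le]
      have hzpow : ∀ t : ℝ, ((1-t)^4)⁻¹ = (fun u : ℝ => u ^ (-4 : ℤ)) (1 - t) := by
        intro t; simp [zpow_neg]
      simp only [hzpow]
      rw [intervalIntegral.integral_comp_sub_left (fun u : ℝ => u ^ (-4 : ℤ)) 1]
      rw [integral_zpow]
      · norm_num [zpow_neg]
        norm_cast
        push_cast
        ring
      · right
        constructor
        · decide
        · rw [Set.uIcc_of_le (by linarith [hs.1] : (1:ℝ) - s ≤ 1 - 0)]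
          intro h
          have := h.1
          norm_num at this
          linarith [hr.2]
    have hJnn : 0 ≤ ∫ t in Set.Ioo (0:ℝ) s, ((1-t)^4)⁻¹ :=
      setIntegral_nonneg measurableSet_Ioo (fun t _ => by positivity)
    have hreal : v s / (1-s)^3
        = v s + 3 * (v s * ∫ t in Set.Ioo (0:ℝ) s, ((1-t)^4)⁻¹) := by
      rw [hJval]
      have h3 : ((1:ℝ)-s)^3 ≠ 0 := by positivity
      field_simp
      ring
    rw [hreal, ENNReal.ofReal_add hvs (by positivity), ENNReal.ofReal_mul (by norm_num : (0:ℝ) ≤ 3),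
      ENNReal.ofReal_mul hvs,
      MeasureTheory.ofReal_integral_eq_lintegral_ofReal hint
        (ae_of_all _ fun t => by positivity),
      ← lintegral_const_mul' _ _ ENNReal.ofReal_ne_top]
    norm_num
    rfl
  -- Tonelli part
  have tonelli : ∫⁻ s in Set.Ioo (0:ℝ) r, ∫⁻ t in Set.Ioo (0:ℝ) s, ENNReal.ofReal (v s) * g t
      ≤ ∫⁻ t in Set.Ioo (0:ℝ) r, ENNReal.ofReal (hatw v t / (1-t)^4) := by
    set F : ℝ → ℝ → ENNReal := fun s t =>
      Set.indicator {p : ℝ × ℝ | p.2 < p.1} (fun p => ENNReal.ofReal (v p.1)) (s, t) * g t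
      with hF_def
    have hF_meas : AEMeasurable (Function.uncurry F)
        ((volume.restrict (Set.Ioo (0:ℝ) r)).prod (volume.restrict (Set.Ioo (0:ℝ) r))) := by
      refine Measurable.aemeasurable ?_
      refine Measurable.mul ?_ (hg_meas.comp measurable_snd)
      exact ((hv.1.comp measurable_fst).ennreal_ofReal).indicator
        (measurableSet_lt measurable_snd measurable_fst)
    have stepA : ∀ s ∈ Set.Ioo (0:ℝ) r,
        ∫⁻ t in Set.Ioo (0:ℝ) s, ENNReal.ofReal (v s) * g t
          = ∫⁻ t in Set.Ioo (0:ℝ) r, F s t := by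
      intro s hs
      have hFs : ∀ t, F s t = (Set.Iio s).indicator (fun t => ENNReal.ofReal (v s) * g t) t := by
        intro t
        by_cases h : t < s <;> simp [hF_def, Set.indicator, h]
      simp only [hFs]
      rw [lintegral_indicator measurableSet_Iio, Measure.restrict_restrict measurableSet_Iio]
      congr 1
      rw [show Set.Iio s ∩ Set.Ioo 0 r = Set.Ioo (0:ℝ) s by
        ext x
        simp only [Set.mem_inter_iff, Set.mem_Iio, Set.mem_Ioo]
        constructor
        · rintro ⟨h1, h2, h3⟩; exact ⟨h2, h1⟩
        · rintro ⟨h1, h2⟩; exact ⟨h2, h1, h2.trans hs.2⟩]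
    have stepB : ∀ t ∈ Set.Ioo (0:ℝ) r,
        ∫⁻ s in Set.Ioo (0:ℝ) r, F s t ≤ ENNReal.ofReal (hatw v t / (1-t)^4) := by
      intro t ht
      have ht1 : t < 1 := ht.2.trans hr.2
      have hFt : ∀ s, F s t = (Set.Ioi t).indicator (fun s => ENNReal.ofReal (v s)) s * g t := by
        intro s
        by_cases h : t < s <;> simp [hF_def, Set.indicator, h]
      simp only [hFt]
      rw [lintegral_mul_const' _ _ ENNReal.ofReal_ne_top,
        lintegral_indicator measurableSet_Ioi, Measure.restrict_restrict measurableSet_Ioi]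
      rw [show Set.Ioi t ∩ Set.Ioo 0 r = Set.Ioo t r by
        ext x
        simp only [Set.mem_inter_iff, Set.mem_Ioi, Set.mem_Ioo]
        constructor
        · rintro ⟨h1, h2, h3⟩; exact ⟨h1, h3⟩
        · rintro ⟨h1, h2⟩; exact ⟨h1, ht.1.trans h1, h2⟩]
      calc (∫⁻ s in Set.Ioo t r, ENNReal.ofReal (v s)) * g t
          ≤ ENNReal.ofReal (hatw v t) * g t :=
            mul_le_mul_left (lint_v_le hv ht.1.le ht1 hr.2.le) _
        _ = ENNReal.ofReal (hatw v t / (1-t)^4) := by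
            rw [div_eq_mul_inv, ENNReal.ofReal_mul (hatw_nonneg hv ht.1.le ht1.le)]
    calc ∫⁻ s in Set.Ioo (0:ℝ) r, ∫⁻ t in Set.Ioo (0:ℝ) s, ENNReal.ofReal (v s) * g t
        = ∫⁻ s in Set.Ioo (0:ℝ) r, ∫⁻ t in Set.Ioo (0:ℝ) r, F s t :=
          setLIntegral_congr_fun measurableSet_Ioo stepA
      _ = ∫⁻ t in Set.Ioo (0:ℝ) r, ∫⁻ s in Set.Ioo (0:ℝ) r, F s t :=
          lintegral_lintegral_swap hF_meas
      _ ≤ ∫⁻ t in Set.Ioo (0:ℝ) r, ENNReal.ofReal (hatw v t / (1-t)^4) :=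
          lintegral_mono_ae ((ae_restrict_iff' measurableSet_Ioo).2 (ae_of_all _ stepB))
  calc ∫⁻ s in Set.Ioo (0:ℝ) r, ENNReal.ofReal (v s / (1-s)^3)
      = ∫⁻ s in Set.Ioo (0:ℝ) r,
          (ENNReal.ofReal (v s) + 3 * ∫⁻ t in Set.Ioo (0:ℝ) s, ENNReal.ofReal (v s) * g t) :=
        setLIntegral_congr_fun measurableSet_Ioo step1
    _ = (∫⁻ s in Set.Ioo (0:ℝ) r, ENNReal.ofReal (v s))
        + ∫⁻ s in Set.Ioo (0:ℝ) r, 3 * ∫⁻ t in Set.Ioo (0:ℝ) s, ENNReal.ofReal (v s) * g t :=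
        lintegral_add_left (hv.1.ennreal_ofReal) _
    _ = (∫⁻ s in Set.Ioo (0:ℝ) r, ENNReal.ofReal (v s))
        + 3 * ∫⁻ s in Set.Ioo (0:ℝ) r, ∫⁻ t in Set.Ioo (0:ℝ) s, ENNReal.ofReal (v s) * g t := by
        rw [lintegral_const_mul' 3 _ (by norm_num)]
    _ ≤ _ := add_le_add (lint_v_le hv le_rfl one_pos hr.2.le) (mul_le_mul_right tonelli 3)

lemma Bhalf_ne_top (hv : RadialWeight v) (hM2 : M2v v < ⊤) :
    (∫⁻ s in Set.Ioo (1/2 : ℝ) 1, ENNReal.ofReal ((1-s)^2 / hatw v s)) ≠ ⊤ := by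
  set Ahalf := ∫⁻ s in Set.Ioo (0:ℝ) (1/2), ENNReal.ofReal (hatw v s / (1-s)^4) with hA_def
  set B := ∫⁻ s in Set.Ioo (1/2 : ℝ) 1, ENNReal.ofReal ((1-s)^2 / hatw v s) with hB_def
  have hmem : (1/2 : ℝ) ∈ Set.Ioo (0:ℝ) 1 := by norm_num
  have hle : Ahalf ^ (1/2 : ℝ) * B ^ (1/2 : ℝ) ≤ M2v v := by
    exact le_iSup₂ (f := fun r (_ : r ∈ Set.Ioo (0:ℝ) 1) =>
      (∫⁻ s in Set.Ioo (0:ℝ) r, ENNReal.ofReal (hatw v s / (1-s)^4)) ^ (1/2 : ℝ) *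
      (∫⁻ s in Set.Ioo r 1, ENNReal.ofReal ((1-s)^2 / hatw v s)) ^ (1/2 : ℝ)) (1/2 : ℝ) hmem
  have hApos : 0 < Ahalf := by
    have hhalf : hatw v (1/2 : ℝ) > 0 := hatw_pos hv (by norm_num)
    have hpt : ∀ s ∈ Set.Ioo (0:ℝ) (1/2),
        ENNReal.ofReal (hatw v (1/2 : ℝ)) ≤ ENNReal.ofReal (hatw v s / (1-s)^4) := by
      intro s hs
      refine ENNReal.ofReal_le_ofReal ?_
      have h1s : (0:ℝ) < 1 - s := by linarith [hs.2]
      rw [le_div_iff₀ (by positivity)]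
      have h4 : (1-s)^4 ≤ 1 := by
        apply pow_le_one₀ h1s.le; linarith [hs.1]
      calc hatw v (1/2 : ℝ) * (1-s)^4 ≤ hatw v (1/2 : ℝ) * 1 := by
            exact mul_le_mul_of_nonneg_left h4 hhalf.le
        _ = hatw v (1/2 : ℝ) := mul_one _
        _ ≤ hatw v s := hatw_anti hv hs.1.le (by linarith [hs.2]) (by norm_num)
    calc (0:ENNReal)
        < ENNReal.ofReal (hatw v (1/2 : ℝ)) * volume (Set.Ioo (0:ℝ) (1/2)) := by
          rw [Real.volume_Ioo]
          exact ENNReal.mul_pos (ENNReal.ofReal_pos.2 hhalf).ne'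
            (ENNReal.ofReal_pos.2 (by norm_num)).ne'
      _ = ∫⁻ _ in Set.Ioo (0:ℝ) (1/2), ENNReal.ofReal (hatw v (1/2 : ℝ)) :=
          (setLIntegral_const _ _).symm
      _ ≤ Ahalf := lintegral_mono_ae ((ae_restrict_iff' measurableSet_Ioo).2 (ae_of_all _ hpt))
  intro hBtop
  have hne0 : Ahalf ^ (1/2 : ℝ) ≠ 0 := by
    simp only [ne_eq, ENNReal.rpow_eq_zero_iff, not_or, not_and_or]
    exact ⟨Or.inl hApos.ne', Or.inr (by norm_num)⟩
  have htop : Ahalf ^ (1/2 : ℝ) * B ^ (1/2 : ℝ) = ⊤ := by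
    rw [hBtop, ENNReal.top_rpow_of_pos (by norm_num), ENNReal.mul_top hne0]
  exact hM2.ne_top (le_antisymm le_top (htop ▸ hle))

lemma B0_ne_top (hv : RadialWeight v) (hM2 : M2v v < ⊤) :
    (∫⁻ s in Set.Ioo (0:ℝ) 1, ENNReal.ofReal ((1-s)^2 / hatw v s)) ≠ ⊤ := by
  have hhalf : 0 < hatw v (1/2 : ℝ) := hatw_pos hv (by norm_num)
  have hsplit : Set.Ioo (0:ℝ) 1 ⊆ Set.Ioc (0:ℝ) (1/2) ∪ Set.Ioo (1/2 : ℝ) 1 := by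
    intro x hx
    rcases le_or_gt x (1/2) with h | h
    · exact Or.inl ⟨hx.1, h⟩
    · exact Or.inr ⟨h, hx.2⟩
  have h1 : (∫⁻ s in Set.Ioc (0:ℝ) (1/2), ENNReal.ofReal ((1-s)^2 / hatw v s)) < ⊤ := by
    have hpt : ∀ s ∈ Set.Ioc (0:ℝ) (1/2),
        ENNReal.ofReal ((1-s)^2 / hatw v s) ≤ ENNReal.ofReal (1 / hatw v (1/2 : ℝ)) := by
      intro s hs
      refine ENNReal.ofReal_le_ofReal ?_
      have h1s : (1-s)^2 ≤ 1 := by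
        apply pow_le_one₀ (by linarith [hs.2]) (by linarith [hs.1])
      exact div_le_div₀ (by positivity) h1s hhalf
        (hatw_anti hv hs.1.le hs.2 (by norm_num))
    calc (∫⁻ s in Set.Ioc (0:ℝ) (1/2), ENNReal.ofReal ((1-s)^2 / hatw v s))
        ≤ ∫⁻ _ in Set.Ioc (0:ℝ) (1/2), ENNReal.ofReal (1 / hatw v (1/2 : ℝ)) :=
          lintegral_mono_ae ((ae_restrict_iff' measurableSet_Ioc).2 (ae_of_all _ hpt))
      _ = ENNReal.ofReal (1 / hatw v (1/2 : ℝ)) * volume (Set.Ioc (0:ℝ) (1/2)) :=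
          setLIntegral_const _ _
      _ < ⊤ := by
          rw [Real.volume_Ioc]
          exact ENNReal.mul_lt_top ENNReal.ofReal_lt_top ENNReal.ofReal_lt_top
  have h2 := Bhalf_ne_top hv hM2
  have hb := calc (∫⁻ s in Set.Ioo (0:ℝ) 1, ENNReal.ofReal ((1-s)^2 / hatw v s))
      ≤ ∫⁻ s in Set.Ioc (0:ℝ) (1/2) ∪ Set.Ioo (1/2 : ℝ) 1,
          ENNReal.ofReal ((1-s)^2 / hatw v s) := lintegral_mono_set hsplit
    _ ≤ (∫⁻ s in Set.Ioc (0:ℝ) (1/2), ENNReal.ofReal ((1-s)^2 / hatw v s))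
        + ∫⁻ s in Set.Ioo (1/2 : ℝ) 1, ENNReal.ofReal ((1-s)^2 / hatw v s) :=
        lintegral_union_le _ _ _
  exact ne_top_of_le_ne_top (ENNReal.add_ne_top.2 ⟨h1.ne, h2⟩) hb

end AuxLemmas

/-- Lemma 2.2: if `M₂(v) < ∞`, then
`sup_{0≤r<1} (∫_0^r v(s)/(1-s)³ ds)^{1/2} (∫_r^1 (1-s)²/v̂(s) ds)^{1/2} < ∞`. -/
theorem statement3 (v : ℝ → ℝ) (hv : RadialWeight v) (hM2 : M2v v < ⊤) :
    (⨆ r ∈ Set.Ico (0:ℝ) 1,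
      (∫⁻ s in Set.Ioo (0:ℝ) r, ENNReal.ofReal (v s / (1-s)^3)) ^ (1/2 : ℝ) *
      (∫⁻ s in Set.Ioo r 1, ENNReal.ofReal ((1-s)^2 / hatw v s)) ^ (1/2 : ℝ)) < ⊤ := by
  set B0 := ∫⁻ s in Set.Ioo (0:ℝ) 1, ENNReal.ofReal ((1-s)^2 / hatw v s) with hB0_def
  set K := (ENNReal.ofReal (hatw v 0)) ^ (1/2 : ℝ) * B0 ^ (1/2 : ℝ)
      + (3:ENNReal) ^ (1/2 : ℝ) * M2v v with hK_def
  have hKlt : K < ⊤ := by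
    refine ENNReal.add_lt_top.2 ⟨?_, ?_⟩
    · exact ENNReal.mul_lt_top
        (ENNReal.rpow_lt_top_of_nonneg (by norm_num) ENNReal.ofReal_ne_top)
        (ENNReal.rpow_lt_top_of_nonneg (by norm_num) (B0_ne_top hv hM2))
    · exact ENNReal.mul_lt_top
        (ENNReal.rpow_lt_top_of_nonneg (by norm_num) (by norm_num)) hM2
  refine lt_of_le_of_lt (iSup₂_le ?_) hKlt
  intro r hr
  rcases eq_or_lt_of_le hr.1 with h0 | h0
  · rw [← h0]
    simp only [Set.Ioo_self, Measure.restrict_empty, lintegral_zero_measure]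
    rw [ENNReal.zero_rpow_of_pos (by norm_num), zero_mul]
    exact zero_le
  · have hrm : r ∈ Set.Ioo (0:ℝ) 1 := ⟨h0, hr.2⟩
    set A := ∫⁻ s in Set.Ioo (0:ℝ) r, ENNReal.ofReal (v s / (1-s)^3) with hA_def
    set Ah := ∫⁻ s in Set.Ioo (0:ℝ) r, ENNReal.ofReal (hatw v s / (1-s)^4) with hAh_def
    set B := ∫⁻ s in Set.Ioo r 1, ENNReal.ofReal ((1-s)^2 / hatw v s) with hB_def
    have hBB0 : B ≤ B0 := lintegral_mono_set (Set.Ioo_subset_Ioo_left hr.1)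
    have hM2r : Ah ^ (1/2 : ℝ) * B ^ (1/2 : ℝ) ≤ M2v v :=
      le_iSup₂ (f := fun r (_ : r ∈ Set.Ioo (0:ℝ) 1) =>
        (∫⁻ s in Set.Ioo (0:ℝ) r, ENNReal.ofReal (hatw v s / (1-s)^4)) ^ (1/2 : ℝ) *
        (∫⁻ s in Set.Ioo r 1, ENNReal.ofReal ((1-s)^2 / hatw v s)) ^ (1/2 : ℝ)) r hrm
    calc A ^ (1/2 : ℝ) * B ^ (1/2 : ℝ)
        ≤ (ENNReal.ofReal (hatw v 0) + 3 * Ah) ^ (1/2 : ℝ) * B ^ (1/2 : ℝ) :=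
          mul_le_mul_left (ENNReal.rpow_le_rpow (keyA hv hrm) (by norm_num)) _
      _ ≤ ((ENNReal.ofReal (hatw v 0)) ^ (1/2 : ℝ) + (3 * Ah) ^ (1/2 : ℝ)) * B ^ (1/2 : ℝ) :=
          mul_le_mul_left (ENNReal.rpow_add_le_add_rpow _ _ (by norm_num) (by norm_num)) _
      _ = (ENNReal.ofReal (hatw v 0)) ^ (1/2 : ℝ) * B ^ (1/2 : ℝ)
          + (3:ENNReal) ^ (1/2 : ℝ) * (Ah ^ (1/2 : ℝ) * B ^ (1/2 : ℝ)) := by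
          rw [ENNReal.mul_rpow_of_nonneg _ _ (by norm_num : (0:ℝ) ≤ 1/2)]
          ring
      _ ≤ K := by
          rw [hK_def]
          exact add_le_add
            (mul_le_mul_right (ENNReal.rpow_le_rpow hBB0 (by norm_num)) _)
            (mul_le_mul_right hM2r _)

end
end

section
/- Let v be a radial weight in the class D̂ satisfying M₁(v) = sup_{0<r<1} (∫_r¹ v̂(s)/(1-s)² ds)^{1/2} (∫₀^r 1/v̂(s) ds)^{1/2} < ∞ and M₂(v) = sup_{0<r<1} (∫₀^r v̂(s)/(1-s)⁴ ds)^{1/2} (∫_r¹ (1-s)²/v̂(s) ds)^{1/2} < ∞. Then there exist constants 0 < c ≤ C depending only on v such that for every positive integer k, c/((k+1)³ v_{2k}) ≤ Σ_{n=1}^∞ 1/(n²(n+k+1)² v_{2n-1}) ≤ C/((k+1)³ v_{2k}), where v_x = ∫₀¹ s^x v(s) ds. -/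
open MeasureTheory Real Set Filter

noncomputable section

open scoped ENNReal

namespace S10
variable {v : ℝ → ℝ} {C : ℝ}

lemma intOn (hv : RadialWeight v) {a b : ℝ} (ha : 0 ≤ a) (hab : a ≤ b) (hb : b ≤ 1) :
    IntervalIntegrable v volume a b := by
  rw [intervalIntegrable_iff_integrableOn_Ioc_of_le hab]
  exact ((integrableOn_Ioc_iff_integrableOn_Ioo).mpr hv.2.2).mono_set (Ioc_subset_Ioc ha hb)

lemma int_nonneg (hv : RadialWeight v) {a b : ℝ} (ha : 0 ≤ a) (hab : a ≤ b) (hb : b ≤ 1) :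
    0 ≤ ∫ s in a..b, v s := by
  rw [intervalIntegral.integral_of_le hab, integral_Ioc_eq_integral_Ioo]
  exact setIntegral_nonneg measurableSet_Ioo fun x hx =>
    (hv.2.1 x ⟨ha.trans hx.1.le, hx.2.trans_le hb⟩).le

lemma hatw_nonneg (hv : RadialWeight v) {a : ℝ} (ha : 0 ≤ a) (hb : a ≤ 1) : 0 ≤ hatw v a :=
  int_nonneg hv ha hb le_rfl

lemma hatw_pos (hv : RadialWeight v) {a : ℝ} (ha : 0 ≤ a) (ha1 : a < 1) : 0 < hatw v a :=
  intervalIntegral.intervalIntegral_pos_of_pos_on (intOn hv ha ha1.le le_rfl)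
    (fun x hx => hv.2.1 x ⟨ha.trans hx.1.le, hx.2⟩) ha1

lemma hatw_add (hv : RadialWeight v) {a b : ℝ} (ha : 0 ≤ a) (hab : a ≤ b) (hb : b ≤ 1) :
    hatw v a = (∫ s in a..b, v s) + hatw v b :=
  (intervalIntegral.integral_add_adjacent_intervals (intOn hv ha hab hb)
    (intOn hv (ha.trans hab) hb le_rfl)).symm

lemma hatw_anti (hv : RadialWeight v) {a b : ℝ} (ha : 0 ≤ a) (hab : a ≤ b) (hb : b ≤ 1) :
    hatw v b ≤ hatw v a := by
  rw [hatw_add hv ha hab hb]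
  linarith [int_nonneg hv ha hab hb]

lemma hatw_doub (hD1 : 1 ≤ C) (hD : ∀ r ∈ Set.Ico (0:ℝ) 1, hatw v r ≤ C * hatw v ((1+r)/2))
    (j : ℕ) {r : ℝ} (hr : 0 ≤ r) (hr1 : r < 1) :
    hatw v r ≤ C^j * hatw v (1 - (1-r)/2^j) := by
  induction j with
  | zero => simp
  | succ j ih =>
    have h2j : (0:ℝ) < 2^j := by positivity
    have h2j1 : (1:ℝ) ≤ 2^j := one_le_pow₀ (by norm_num)
    set t := 1 - (1-r)/2^j with ht
    have htr : r ≤ t := by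
      have : (1-r)/2^j ≤ 1-r := div_le_self (by linarith) h2j1
      simp only [ht]; linarith
    have ht1 : t < 1 := by
      have : 0 < (1-r)/2^j := div_pos (by linarith) h2j
      simp only [ht]; linarith
    have hstep := hD t ⟨hr.trans htr, ht1⟩
    have heq : (1+t)/2 = 1 - (1-r)/2^(j+1) := by
      simp only [ht]; field_simp; ring
    calc hatw v r ≤ C^j * hatw v t := ih
    _ ≤ C^j * (C * hatw v ((1+t)/2)) := by
        apply mul_le_mul_of_nonneg_left hstep (pow_nonneg (by linarith) j)
    _ = C^(j+1) * hatw v (1 - (1-r)/2^(j+1)) := by rw [heq]; ring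

lemma hatw_compare (hv : RadialWeight v) (hD1 : 1 ≤ C)
    (hD : ∀ r ∈ Set.Ico (0:ℝ) 1, hatw v r ≤ C * hatw v ((1+r)/2))
    (j : ℕ) {r t : ℝ} (hr : 0 ≤ r) (hrt : r ≤ t) (ht : t < 1) (hgap : 1 - r ≤ 2^j * (1-t)) :
    hatw v r ≤ C^j * hatw v t := by
  have h2j : (0:ℝ) < 2^j := by positivity
  have h1 := hatw_doub hD1 hD j hr (hrt.trans_lt ht)
  refine h1.trans (mul_le_mul_of_nonneg_left ?_ (pow_nonneg (by linarith) j))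
  have hle : t ≤ 1 - (1-r)/2^j := by
    have h2 : (1-r)/2^j ≤ 1-t := by
      rw [div_le_iff₀ h2j]; nlinarith
    linarith
  exact hatw_anti hv (hr.trans hrt) hle
    (by nlinarith [div_nonneg (by linarith : (0:ℝ) ≤ 1 - r) h2j.le])

lemma pow_v_intOn (hv : RadialWeight v) (x : ℕ) {a b : ℝ} (ha : 0 ≤ a) (hab : a ≤ b) (hb : b ≤ 1) :
    IntervalIntegrable (fun s => s^x * v s) volume a b := by
  rw [intervalIntegrable_iff_integrableOn_Ioc_of_le hab]
  have hbase : IntegrableOn v (Ioc a b) :=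
    ((integrableOn_Ioc_iff_integrableOn_Ioo).mpr hv.2.2).mono_set (Ioc_subset_Ioc ha hb)
  refine Integrable.mono' hbase.abs
    ((measurable_id.pow_const x).mul hv.1).aestronglyMeasurable ?_
  rw [ae_restrict_iff' measurableSet_Ioc]
  refine ae_of_all _ fun s hs => ?_
  have h0 : 0 ≤ s := ha.trans hs.1.le
  have h1 : s ≤ 1 := hs.2.trans hb
  rw [Real.norm_eq_abs, abs_mul, abs_pow, abs_of_nonneg h0]
  calc s^x * |v s| ≤ 1 * |v s| := by
        apply mul_le_mul_of_nonneg_right (pow_le_one₀ h0 h1) (abs_nonneg _)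
  _ = |v s| := one_mul _

lemma integral_mono_Ioo {f g : ℝ → ℝ} {a b : ℝ} (hab : a ≤ b)
    (hf : IntervalIntegrable f volume a b) (hg : IntervalIntegrable g volume a b)
    (h : ∀ s ∈ Ioo a b, f s ≤ g s) :
    ∫ s in a..b, f s ≤ ∫ s in a..b, g s := by
  apply intervalIntegral.integral_mono_ae_restrict hab hf hg
  rw [← Measure.restrict_congr_set Ioo_ae_eq_Icc]
  exact (ae_restrict_iff' measurableSet_Ioo).2 (ae_of_all _ h)

lemma vx_pos (hv : RadialWeight v) (x : ℕ) : 0 < vx v x :=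
  intervalIntegral.intervalIntegral_pos_of_pos_on
    (pow_v_intOn hv x le_rfl zero_le_one le_rfl)
    (fun s hs => mul_pos (pow_pos hs.1 x) (hv.2.1 s ⟨hs.1.le, hs.2⟩)) one_pos

lemma vx_anti (hv : RadialWeight v) {x y : ℕ} (hxy : x ≤ y) : vx v y ≤ vx v x :=
  integral_mono_Ioo zero_le_one (pow_v_intOn hv y le_rfl zero_le_one le_rfl)
    (pow_v_intOn hv x le_rfl zero_le_one le_rfl) fun s hs =>
      mul_le_mul_of_nonneg_right (pow_le_pow_of_le_one hs.1.le hs.2.le hxy)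
        (hv.2.1 s ⟨hs.1.le, hs.2⟩).le

lemma vx_ge (hv : RadialWeight v) (x : ℕ) {a : ℝ} (ha : 0 ≤ a) (ha1 : a ≤ 1) :
    a^x * hatw v a ≤ vx v x := by
  have hsplit : vx v x = (∫ s in (0:ℝ)..a, s^x * v s) + ∫ s in a..1, s^x * v s :=
    (intervalIntegral.integral_add_adjacent_intervals
      (pow_v_intOn hv x le_rfl ha (ha1.trans le_rfl))
      (pow_v_intOn hv x ha ha1 le_rfl)).symm
  have h1 : 0 ≤ ∫ s in (0:ℝ)..a, s^x * v s := by
    rw [intervalIntegral.integral_of_le ha, integral_Ioc_eq_integral_Ioo]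
    exact setIntegral_nonneg measurableSet_Ioo fun s hs =>
      (mul_pos (pow_pos hs.1 x) (hv.2.1 s ⟨hs.1.le, hs.2.trans_le ha1⟩)).le
  have h2 : ∫ s in a..1, a^x * v s ≤ ∫ s in a..1, s^x * v s := by
    apply integral_mono_Ioo ha1 ((intOn hv ha ha1 le_rfl).const_mul _)
      (pow_v_intOn hv x ha ha1 le_rfl) fun s hs =>
        mul_le_mul_of_nonneg_right (pow_le_pow_left₀ ha hs.1.le x)
          (hv.2.1 s ⟨ha.trans hs.1.le, hs.2⟩).le
  rw [intervalIntegral.integral_const_mul] at h2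
  have : (a^x) * hatw v a ≤ ∫ s in a..1, s^x * v s := h2
  linarith

lemma expsum_summable (hD1 : 1 ≤ C) :
    Summable (fun i : ℕ => C^(i+1) * Real.exp (-(2:ℝ)^(i+1)/4)) := by
  have hC0 : (0:ℝ) < C := one_pos.trans_le hD1
  apply summable_of_ratio_norm_eventually_le (r := 1/2) (by norm_num)
  have h1 : Tendsto (fun i : ℕ => (2:ℝ)^(i+1)/4) atTop atTop :=
    ((tendsto_pow_atTop_atTop_of_one_lt one_lt_two).comp (tendsto_add_atTop_nat 1)).atTop_div_const
      (by norm_num)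
  have h2 : Tendsto (fun i : ℕ => C * Real.exp (-(2:ℝ)^(i+1)/4)) atTop (nhds 0) := by
    have := (Real.tendsto_exp_atBot.comp (tendsto_neg_atBot_iff.mpr h1)).const_mul C
    simpa [neg_div] using this
  filter_upwards [h2.eventually_lt_const (by norm_num : (0:ℝ) < 1/2)] with i hi
  have hkey : Real.exp (-(2:ℝ)^(i+1+1)/4)
      = Real.exp (-(2:ℝ)^(i+1)/4) * Real.exp (-(2:ℝ)^(i+1)/4) := by
    rw [← Real.exp_add]; congr 1; ring
  have hpos1 : (0:ℝ) < C^(i+1+1) * Real.exp (-(2:ℝ)^(i+1+1)/4) :=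
    mul_pos (pow_pos hC0 _) (Real.exp_pos _)
  have hpos2 : (0:ℝ) < C^(i+1) * Real.exp (-(2:ℝ)^(i+1)/4) :=
    mul_pos (pow_pos hC0 _) (Real.exp_pos _)
  rw [Real.norm_eq_abs, Real.norm_eq_abs, abs_of_pos hpos1, abs_of_pos hpos2]
  have : C^(i+1+1) * Real.exp (-(2:ℝ)^(i+1+1)/4)
      = (C * Real.exp (-(2:ℝ)^(i+1)/4)) * (C^(i+1) * Real.exp (-(2:ℝ)^(i+1)/4)) := by
    rw [hkey]; ring
  rw [this]
  exact mul_le_mul_of_nonneg_right hi.le hpos2.le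

set_option maxHeartbeats 1000000 in
lemma vx_le (hv : RadialWeight v) (hD1 : 1 ≤ C)
    (hD : ∀ r ∈ Set.Ico (0:ℝ) 1, hatw v r ≤ C * hatw v ((1+r)/2)) {k : ℕ} (hk : 1 ≤ k) :
    vx v (2*k) ≤ (1 + ∑' i : ℕ, C^(i+1) * Real.exp (-(2:ℝ)^(i+1)/4))
      * hatw v (1 - 1/((k:ℝ)+1)) := by
  have hC0 : (0:ℝ) < C := one_pos.trans_le hD1
  set J := Nat.clog 2 (k+1) with hJdef
  have hJ1 : (k+1 : ℕ) ≤ 2^J := Nat.le_pow_clog one_lt_two _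
  have hJpos : 1 ≤ J := Nat.clog_pos one_lt_two (by omega)
  have hJ2 : (2:ℕ)^J ≤ 4*k := by
    have h : (2:ℕ) ^ (J - 1) < k + 1 := by
      have h0 := Nat.pow_pred_clog_lt_self (b := 2) one_lt_two (x := k+1) (by omega)
      rw [← hJdef] at h0
      simpa [Nat.pred_eq_sub_one] using h0
    have h2 : (2:ℕ)^J = 2 * 2^(J-1) := by
      conv_lhs => rw [show J = (J-1)+1 by omega]
      rw [pow_succ']
    omega
  set a : ℕ → ℝ := fun j => 1 - (1/2:ℝ)^j with hadef
  have ha0 : a 0 = 0 := by simp [hadef]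
  have hahalf : ∀ j, (0:ℝ) < (1/2:ℝ)^j ∧ (1/2:ℝ)^j ≤ 1 :=
    fun j => ⟨by positivity, pow_le_one₀ (by norm_num) (by norm_num)⟩
  have ha_nonneg : ∀ j, 0 ≤ a j := fun j => by
    have := (hahalf j).2; simp only [hadef]; linarith
  have ha_lt1 : ∀ j, a j < 1 := fun j => by
    have := (hahalf j).1; simp only [hadef]; linarith
  have ha_mono : ∀ {i j : ℕ}, i ≤ j → a i ≤ a j := fun {i j} hij => by
    have : (1/2:ℝ)^j ≤ (1/2:ℝ)^i :=
      pow_le_pow_of_le_one (by norm_num) (by norm_num) hij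
    simp only [hadef]; linarith
  set ρ : ℝ := 1 - 1/((k:ℝ)+1) with hρdef
  have hk1 : (0:ℝ) < (k:ℝ)+1 := by positivity
  have hρ0 : 0 ≤ ρ := by
    have hk' : (1:ℝ) ≤ (k:ℝ) := by exact_mod_cast hk
    have : 1/((k:ℝ)+1) ≤ 1 := by rw [div_le_one hk1]; linarith
    simp only [hρdef]; linarith
  have hρ1 : ρ < 1 := by
    have : 0 < 1/((k:ℝ)+1) := by positivity
    simp only [hρdef]; linarith
  have h2Jr : ((k:ℝ)+1) ≤ (2:ℝ)^J := by exact_mod_cast hJ1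
  have hρaJ : ρ ≤ a J := by
    have h1 : (1/2:ℝ)^J = 1/(2:ℝ)^J := by rw [div_pow]; norm_num
    have h2 : 1/(2:ℝ)^J ≤ 1/((k:ℝ)+1) := one_div_le_one_div_of_le hk1 h2Jr
    simp only [hρdef, hadef]; rw [h1]; linarith
  set W : ℝ := hatw v ρ with hWdef
  have hW0 : 0 ≤ W := hatw_nonneg hv hρ0 hρ1.le
  set f : ℝ → ℝ := fun s => s^(2*k) * v s with hfdef
  have hint : ∀ i, IntervalIntegrable f volume (a i) (a (i+1)) :=
    fun i => pow_v_intOn hv _ (ha_nonneg i) (ha_mono (Nat.le_succ i)) (ha_lt1 (i+1)).le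
  have htel : ∑ j ∈ Finset.range J, (∫ s in a j..a (j+1), f s) = ∫ s in (a 0)..(a J), f s :=
    intervalIntegral.sum_integral_adjacent_intervals (fun i _ => hint i)
  have hsplit : vx v (2*k) = (∫ s in (a 0)..(a J), f s) + ∫ s in a J..1, f s := by
    rw [vx, show (0:ℝ) = a 0 from ha0.symm]
    exact (intervalIntegral.integral_add_adjacent_intervals
      (pow_v_intOn hv (2*k) (ha_nonneg 0) (ha_mono (Nat.zero_le J)) (ha_lt1 J).le)
      (pow_v_intOn hv (2*k) (ha_nonneg J) (ha_lt1 J).le le_rfl)).symm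
  have piece2 : ∫ s in a J..1, f s ≤ W := by
    have h1 : ∫ s in a J..1, f s ≤ ∫ s in a J..1, v s := by
      apply integral_mono_Ioo (ha_lt1 J).le (pow_v_intOn hv _ (ha_nonneg J) (ha_lt1 J).le le_rfl)
        (intOn hv (ha_nonneg J) (ha_lt1 J).le le_rfl)
      intro s hs
      have hv0 := hv.2.1 s ⟨(ha_nonneg J).trans hs.1.le, hs.2⟩
      have hs1 : s^(2*k) ≤ 1 := pow_le_one₀ ((ha_nonneg J).trans hs.1.le) hs.2.le
      have hsn : (0:ℝ) ≤ s := (ha_nonneg J).trans hs.1.le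
      calc f s = s^(2*k) * v s := by rw [hfdef]
      _ ≤ v s := by nlinarith
    exact h1.trans (hatw_anti hv hρ0 hρaJ (ha_lt1 J).le)
  have piecej : ∀ j ∈ Finset.range J, (∫ s in a j..a (j+1), f s)
      ≤ (C^(J-j) * Real.exp (-(2:ℝ)^(J-j)/4)) * W := by
    intro j hj
    rw [Finset.mem_range] at hj
    have hjJ : j ≤ J := hj.le
    -- step 1
    have hmono : ∫ s in a j..a (j+1), f s
        ≤ (a (j+1))^(2*k) * ∫ s in a j..a (j+1), v s := by
      rw [← intervalIntegral.integral_const_mul]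
      apply integral_mono_Ioo (ha_mono (Nat.le_succ j)) (hint j)
        ((intOn hv (ha_nonneg j) (ha_mono (Nat.le_succ j)) (ha_lt1 _).le).const_mul _)
      intro s hs
      have hsn : (0:ℝ) ≤ s := (ha_nonneg j).trans hs.1.le
      exact mul_le_mul_of_nonneg_right (pow_le_pow_left₀ hsn hs.2.le _)
        (hv.2.1 s ⟨hsn, hs.2.trans (ha_lt1 _)⟩).le
    have hmid : ∫ s in a j..a (j+1), v s ≤ hatw v (a j) := by
      rw [hatw_add hv (ha_nonneg j) (ha_mono (Nat.le_succ j)) (ha_lt1 _).le]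
      linarith [hatw_nonneg hv (ha_nonneg (j+1)) (ha_lt1 (j+1)).le]
    have step1 : ∫ s in a j..a (j+1), f s ≤ (a (j+1))^(2*k) * hatw v (a j) :=
      hmono.trans (mul_le_mul_of_nonneg_left hmid (pow_nonneg (ha_nonneg _) _))
    -- step 2 : (a (j+1))^(2*k) ≤ exp (-(2:ℝ)^(J-j)/4)
    have hpowsplit : (2:ℝ)^(J-j) * (2:ℝ)^j = (2:ℝ)^J := by
      rw [← pow_add]; congr 1; omega
    have h2j : (0:ℝ) < (2:ℝ)^j := by positivity
    have hhalfj : (1/2:ℝ)^(j+1) = 1/(2 * 2^j) := by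
      rw [div_pow, pow_succ]; norm_num; ring
    have step2 : (a (j+1))^(2*k) ≤ Real.exp (-(2:ℝ)^(J-j)/4) := by
      have e1 : a (j+1) ≤ Real.exp (-(1/2:ℝ)^(j+1)) := by
        have := Real.add_one_le_exp (-(1/2:ℝ)^(j+1))
        simp only [hadef]; linarith
      have e2 : (a (j+1))^(2*k) ≤ Real.exp (-(1/2:ℝ)^(j+1))^(2*k) :=
        pow_le_pow_left₀ (ha_nonneg (j+1)) e1 _
      rw [← Real.exp_nat_mul] at e2
      refine e2.trans (Real.exp_le_exp.mpr ?_)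
      -- (2*k)*(-(1/2)^(j+1)) ≤ -(2:ℝ)^(J-j)/4
      rw [hhalfj]
      have h4k : (2:ℝ)^J ≤ 4*(k:ℝ) := by exact_mod_cast hJ2
      have hJj : (2:ℝ)^(J-j) = (2:ℝ)^J / (2:ℝ)^j := by
        rw [eq_div_iff (ne_of_gt h2j)]; exact hpowsplit
      rw [hJj]
      push_cast
      have key1 : -((2:ℝ)^J/2^j)/4 = -((2:ℝ)^J/(4*2^j)) := by ring
      have key2 : 2*(k:ℝ)*-(1/(2*2^j)) = -((k:ℝ)/2^j) := by
        field_simp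
      rw [key1, key2, neg_le_neg_iff, div_le_div_iff₀ (by positivity) h2j]
      nlinarith [h2j]
    -- step 3
    have haj : a j ≤ a J := ha_mono hjJ
    have step3 : hatw v (a j) ≤ C^(J-j) * hatw v (a J) := by
      apply hatw_compare hv hD1 hD (J-j) (ha_nonneg j) haj (ha_lt1 J)
      have hgap1 : (1:ℝ) - a j = (1/2:ℝ)^j := by simp [hadef]
      have hgap2 : (1:ℝ) - a J = (1/2:ℝ)^J := by simp [hadef]
      rw [hgap1, hgap2, div_pow, div_pow, one_pow, one_pow, mul_one_div,
        div_le_div_iff₀ (by positivity : (0:ℝ) < 2^j) (by positivity : (0:ℝ) < 2^J)]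
      nlinarith [hpowsplit]
    have step4 : hatw v (a J) ≤ W := hatw_anti hv hρ0 hρaJ (ha_lt1 J).le
    have hCJj : (0:ℝ) ≤ C^(J-j) := pow_nonneg hC0.le _
    calc ∫ s in a j..a (j+1), f s ≤ (a (j+1))^(2*k) * hatw v (a j) := step1
    _ ≤ Real.exp (-(2:ℝ)^(J-j)/4) * (C^(J-j) * hatw v (a J)) := by
        have hh := hatw_nonneg hv (ha_nonneg j) (ha_lt1 j).le
        apply mul_le_mul step2 step3 hh (Real.exp_nonneg _)
    _ ≤ Real.exp (-(2:ℝ)^(J-j)/4) * (C^(J-j) * W) := by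
        apply mul_le_mul_of_nonneg_left (mul_le_mul_of_nonneg_left step4 hCJj)
          (Real.exp_nonneg _)
    _ = (C^(J-j) * Real.exp (-(2:ℝ)^(J-j)/4)) * W := by ring
  -- sum the pieces
  set g : ℕ → ℝ := fun i => C^(i+1) * Real.exp (-(2:ℝ)^(i+1)/4) with hgdef
  have hg0 : ∀ i, 0 ≤ g i := fun i => mul_nonneg (pow_nonneg hC0.le _) (Real.exp_nonneg _)
  have hsum1 : ∑ j ∈ Finset.range J, (C^(J-j) * Real.exp (-(2:ℝ)^(J-j)/4))
      = ∑ j ∈ Finset.range J, g j := by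
    rw [← Finset.sum_range_reflect g J]
    apply Finset.sum_congr rfl
    intro j hj
    rw [Finset.mem_range] at hj
    have : J - 1 - j + 1 = J - j := by omega
    simp only [hgdef, this]
  have hsum2 : ∑ j ∈ Finset.range J, g j ≤ ∑' i, g i :=
    Summable.sum_le_tsum _ (fun i _ => hg0 i) (expsum_summable hD1)
  have hfirst : (∫ s in (a 0)..(a J), f s) ≤ (∑' i, g i) * W := by
    rw [← htel]
    calc ∑ j ∈ Finset.range J, (∫ s in a j..a (j+1), f s)
        ≤ ∑ j ∈ Finset.range J, (C^(J-j) * Real.exp (-(2:ℝ)^(J-j)/4)) * W :=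
          Finset.sum_le_sum piecej
    _ = (∑ j ∈ Finset.range J, (C^(J-j) * Real.exp (-(2:ℝ)^(J-j)/4))) * W := by
          rw [Finset.sum_mul]
    _ ≤ (∑' i, g i) * W := by
          apply mul_le_mul_of_nonneg_right _ hW0
          rw [hsum1]; exact hsum2
  rw [hsplit]
  have hadd := add_le_add hfirst piece2
  nlinarith [hadd]

lemma sqrt_mul_le (A B M : ℝ≥0∞) (h : A ^ (1/2:ℝ) * B ^ (1/2:ℝ) ≤ M) : A * B ≤ M^2 := by
  have hA : (A ^ (1/2:ℝ))^(2:ℕ) = A := by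
    rw [← ENNReal.rpow_natCast (A ^ (1/2:ℝ)) 2, ← ENNReal.rpow_mul]
    norm_num
  have hB : (B ^ (1/2:ℝ))^(2:ℕ) = B := by
    rw [← ENNReal.rpow_natCast (B ^ (1/2:ℝ)) 2, ← ENNReal.rpow_mul]
    norm_num
  calc A * B = (A ^ (1/2:ℝ))^(2:ℕ) * (B ^ (1/2:ℝ))^(2:ℕ) := by rw [hA, hB]
  _ = (A ^ (1/2:ℝ) * B ^ (1/2:ℝ))^(2:ℕ) := (mul_pow _ _ 2).symm
  _ ≤ M^(2:ℕ) := pow_le_pow_left' h 2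

lemma extractB {A B M : ℝ≥0∞} {a : ℝ} (h : A * B ≤ M^2) (ha : 0 < a)
    (hA : ENNReal.ofReal a ≤ A) : B ≤ M^2 * ENNReal.ofReal (1/a) := by
  have h1 : B * ENNReal.ofReal a ≤ M^2 :=
    le_trans (mul_le_mul' le_rfl hA) (by rwa [mul_comm])
  have hne : ENNReal.ofReal a ≠ 0 := (ENNReal.ofReal_pos.mpr ha).ne'
  rw [← ENNReal.le_div_iff_mul_le (Or.inl hne) (Or.inl ENNReal.ofReal_ne_top)] at h1
  rwa [div_eq_mul_inv, ← ENNReal.ofReal_inv_of_pos ha, ← one_div] at h1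

lemma lint_lower {f : ℝ → ℝ} {a b c : ℝ} (h : ∀ s ∈ Ioo a b, c ≤ f s) :
    ENNReal.ofReal c * ENNReal.ofReal (b - a) ≤ ∫⁻ s in Ioo a b, ENNReal.ofReal (f s) := by
  have h1 : ∫⁻ _ in Ioo a b, ENNReal.ofReal c ≤ ∫⁻ s in Ioo a b, ENNReal.ofReal (f s) :=
    lintegral_mono_ae ((ae_restrict_iff' measurableSet_Ioo).2
      (ae_of_all _ fun s hs => ENNReal.ofReal_le_ofReal (h s hs)))
  rwa [setLIntegral_const, Real.volume_Ioo] at h1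

lemma keyA (hv : RadialWeight v) (hD1 : 1 ≤ C)
    (hD : ∀ r ∈ Set.Ico (0:ℝ) 1, hatw v r ≤ C * hatw v ((1+r)/2))
    {r : ℝ} (hr : 0 < r) (hr1 : r < 1) :
    (∫⁻ s in Set.Ioo (0:ℝ) r, ENNReal.ofReal (1 / hatw v s))
      ≤ (M1v v)^2 * ENNReal.ofReal (2*C*(1-r)/hatw v r) := by
  have hC0 : (0:ℝ) < C := one_pos.trans_le hD1
  set A := ∫⁻ s in Set.Ioo r 1, ENNReal.ofReal (hatw v s / (1-s)^2) with hA
  set B := ∫⁻ s in Set.Ioo (0:ℝ) r, ENNReal.ofReal (1 / hatw v s) with hB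
  have hsup : A ^ (1/2:ℝ) * B ^ (1/2:ℝ) ≤ M1v v :=
    le_iSup₂ (f := fun (t : ℝ) (_ : t ∈ Set.Ioo (0:ℝ) 1) =>
      (∫⁻ s in Set.Ioo t 1, ENNReal.ofReal (hatw v s / (1-s)^2)) ^ (1/2:ℝ) *
      (∫⁻ s in Set.Ioo (0:ℝ) t, ENNReal.ofReal (1 / hatw v s)) ^ (1/2:ℝ)) r ⟨hr, hr1⟩
  have hAB : A * B ≤ (M1v v)^2 := sqrt_mul_le _ _ _ hsup
  set W := hatw v r with hW
  have hWpos : 0 < W := hatw_pos hv hr.le hr1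
  have hmid : r < (1+r)/2 := by linarith
  have hmid1 : (1+r)/2 < 1 := by linarith
  have hlow : ∀ s ∈ Ioo r ((1+r)/2), W/C/(1-r)^2 ≤ hatw v s / (1-s)^2 := by
    intro s hs
    have hs1 : s < 1 := hs.2.trans hmid1
    have h1 : W ≤ C * hatw v ((1+r)/2) := hD r ⟨hr.le, hr1⟩
    have h2 : hatw v ((1+r)/2) ≤ hatw v s :=
      hatw_anti hv (hr.le.trans hs.1.le) hs.2.le hmid1.le
    have h3 : W / C ≤ hatw v s := by rw [div_le_iff₀ hC0]; nlinarith
    have h4 : (1-s)^2 ≤ (1-r)^2 := by nlinarith [hs.1]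
    exact div_le_div₀ (hatw_nonneg hv (hr.le.trans hs.1.le) hs1.le) h3 (by nlinarith [hs.2, hmid1]) h4
  have hAlow : ENNReal.ofReal (W/(2*C*(1-r))) ≤ A := by
    have hl := lint_lower hlow
    have hsub : (∫⁻ s in Ioo r ((1+r)/2), ENNReal.ofReal (hatw v s / (1-s)^2)) ≤ A :=
      lintegral_mono_set (Ioo_subset_Ioo le_rfl hmid1.le)
    refine le_trans ?_ (hl.trans hsub)
    rw [← ENNReal.ofReal_mul (by positivity)]
    apply ENNReal.ofReal_le_ofReal
    have h1r : (0:ℝ) < 1 - r := by linarith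
    have he : (1+r)/2 - r = (1-r)/2 := by ring
    have heq : W/C/(1-r)^2 * ((1-r)/2) = W/(2*C*(1-r)) := by
      field_simp
    rw [he, heq]
  have hfinal := extractB hAB (div_pos hWpos (by nlinarith)) hAlow
  rwa [one_div_div] at hfinal

lemma keyB (hv : RadialWeight v) (hD1 : 1 ≤ C)
    {r : ℝ} (hr : 1/2 ≤ r) (hr1 : r < 1) :
    (∫⁻ s in Set.Ioo r 1, ENNReal.ofReal ((1-s)^2 / hatw v s))
      ≤ (M2v v)^2 * ENNReal.ofReal (16*(1-r)^3/hatw v r) := by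
  have hr0 : (0:ℝ) < r := by linarith
  set A := ∫⁻ s in Set.Ioo (0:ℝ) r, ENNReal.ofReal (hatw v s / (1-s)^4) with hA
  set B := ∫⁻ s in Set.Ioo r 1, ENNReal.ofReal ((1-s)^2 / hatw v s) with hB
  have hsup : A ^ (1/2:ℝ) * B ^ (1/2:ℝ) ≤ M2v v :=
    le_iSup₂ (f := fun (t : ℝ) (_ : t ∈ Set.Ioo (0:ℝ) 1) =>
      (∫⁻ s in Set.Ioo (0:ℝ) t, ENNReal.ofReal (hatw v s / (1-s)^4)) ^ (1/2:ℝ) *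
      (∫⁻ s in Set.Ioo t 1, ENNReal.ofReal ((1-s)^2 / hatw v s)) ^ (1/2:ℝ)) r ⟨hr0, hr1⟩
  have hAB : A * B ≤ (M2v v)^2 := sqrt_mul_le _ _ _ hsup
  set W := hatw v r with hW
  have hWpos : 0 < W := hatw_pos hv hr0.le hr1
  have hlow : ∀ s ∈ Ioo (2*r-1) r, W/(16*(1-r)^4) ≤ hatw v s / (1-s)^4 := by
    intro s hs
    have hs0 : 0 ≤ s := by nlinarith [hs.1]
    have hs1 : s < 1 := hs.2.trans hr1
    have h2 : W ≤ hatw v s := hatw_anti hv hs0 hs.2.le hr1.le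
    have hs2 : (0:ℝ) ≤ 1 - s := by linarith
    have hs3 : 1 - s ≤ 2*(1-r) := by linarith [hs.1]
    have h4 : (1-s)^4 ≤ 16*(1-r)^4 := by
      calc (1-s)^4 ≤ (2*(1-r))^4 := pow_le_pow_left₀ hs2 hs3 4
      _ = 16*(1-r)^4 := by ring
    have h5 : (0:ℝ) < (1-s)^4 := pow_pos (by linarith) 4
    exact div_le_div₀ (hatw_nonneg hv hs0 hs1.le) h2 h5 h4
  have hAlow : ENNReal.ofReal (W/(16*(1-r)^3)) ≤ A := by
    have hl := lint_lower hlow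
    have hsub : (∫⁻ s in Ioo (2*r-1) r, ENNReal.ofReal (hatw v s / (1-s)^4)) ≤ A :=
      lintegral_mono_set (Ioo_subset_Ioo (by linarith) le_rfl)
    refine le_trans ?_ (hl.trans hsub)
    rw [← ENNReal.ofReal_mul (by positivity)]
    apply ENNReal.ofReal_le_ofReal
    have h1r : (0:ℝ) < 1 - r := by linarith
    have he : r - (2*r-1) = 1-r := by ring
    have heq : W/(16*(1-r)^4) * (1-r) = W/(16*(1-r)^3) := by
      field_simp
    rw [he, heq]
  have hfinal := extractB hAB (div_pos hWpos (mul_pos (by norm_num) (pow_pos (by linarith) 3))) hAlow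
  rwa [one_div_div] at hfinal

def rn (n : ℕ) : ℝ := 1 - 1/((n:ℝ)+1)

lemma rn_succ (n : ℕ) : rn (n+1) = 1 - 1/((n:ℝ)+2) := by
  unfold rn; push_cast; ring_nf

lemma rn_nonneg (n : ℕ) : 0 ≤ rn n := by
  unfold rn
  have h1 : (0:ℝ) < (n:ℝ)+1 := by positivity
  have : 1/((n:ℝ)+1) ≤ 1 := by rw [div_le_one h1]; linarith
  linarith

lemma rn_lt_one (n : ℕ) : rn n < 1 := by
  unfold rn
  have : 0 < 1/((n:ℝ)+1) := by positivity
  linarith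

lemma rn_strict (n : ℕ) : rn n < rn (n+1) := by
  rw [rn_succ]; unfold rn
  have h1 : (0:ℝ) < (n:ℝ)+1 := by positivity
  have h2 : (0:ℝ) < (n:ℝ)+2 := by positivity
  have : 1/((n:ℝ)+2) < 1/((n:ℝ)+1) := by
    apply div_lt_div_of_pos_left one_pos h1; linarith
  linarith

lemma rn_mono : Monotone rn := monotone_nat_of_le_succ fun n => (rn_strict n).le

lemma rn_len (n : ℕ) : rn (n+1) - rn n = 1/((((n:ℝ)+1))*((n:ℝ)+2)) := by
  rw [rn_succ]; unfold rn
  have h1 : ((n:ℝ)+1) ≠ 0 := by positivity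
  have h2 : ((n:ℝ)+2) ≠ 0 := by positivity
  field_simp
  ring

lemma Sn_disj : Pairwise (Function.onFun Disjoint fun n => Ioo (rn n) (rn (n+1))) := by
  have key : ∀ i j : ℕ, i < j → Disjoint (Ioo (rn i) (rn (i+1))) (Ioo (rn j) (rn (j+1))) := by
    intro i j hij
    apply Set.disjoint_left.mpr
    intro x hxi hxj
    have h1 : x < rn (i+1) := hxi.2
    have h2 : rn (i+1) ≤ rn j := rn_mono hij
    exact absurd hxj.1 (by linarith)
  intro i j hij
  rcases lt_or_gt_of_ne hij with h | h
  · exact key i j h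
  · exact (key j i h).symm

lemma termA (hv : RadialWeight v) (n : ℕ) :
    ENNReal.ofReal (1/(((n:ℝ)+1)^2 * hatw v (rn n))) ≤
      2 * ∫⁻ s in Ioo (rn n) (rn (n+1)), ENNReal.ofReal (1/hatw v s) := by
  have hWpos : 0 < hatw v (rn n) := hatw_pos hv (rn_nonneg n) (rn_lt_one n)
  have hlow : ∀ s ∈ Ioo (rn n) (rn (n+1)), 1/hatw v (rn n) ≤ 1/hatw v s := by
    intro s hs
    have hs1 : s < 1 := hs.2.trans (rn_lt_one (n+1))
    have h2 : hatw v s ≤ hatw v (rn n) := hatw_anti hv (rn_nonneg n) hs.1.le hs1.le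
    exact one_div_le_one_div_of_le (hatw_pos hv ((rn_nonneg n).trans hs.1.le) hs1) h2
  have hl := lint_lower hlow
  rw [rn_len n] at hl
  calc ENNReal.ofReal (1/(((n:ℝ)+1)^2 * hatw v (rn n)))
      ≤ 2 * (ENNReal.ofReal (1/hatw v (rn n)) * ENNReal.ofReal (1/((((n:ℝ)+1))*((n:ℝ)+2)))) := by
        rw [show (2:ℝ≥0∞) = ENNReal.ofReal 2 by simp,
          ← ENNReal.ofReal_mul (by positivity), ← ENNReal.ofReal_mul (by norm_num)]
        apply ENNReal.ofReal_le_ofReal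
        have hx : (0:ℝ) < (n:ℝ)+1 := by positivity
        have hx2 : (0:ℝ) < (n:ℝ)+2 := by positivity
        have hrhs : 2 * (1/hatw v (rn n) * (1/((((n:ℝ)+1))*((n:ℝ)+2))))
            = 2/(hatw v (rn n) * (((n:ℝ)+1)*((n:ℝ)+2))) := by
          field_simp
        rw [hrhs, div_le_div_iff₀ (by positivity) (by positivity)]
        nlinarith [mul_le_mul_of_nonneg_left (show (n:ℝ)+2 ≤ 2*((n:ℝ)+1) by linarith)
          (mul_nonneg hWpos.le hx.le)]
  _ ≤ 2 * ∫⁻ s in Ioo (rn n) (rn (n+1)), ENNReal.ofReal (1/hatw v s) :=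
        mul_le_mul_right hl 2

lemma termB (hv : RadialWeight v) (n : ℕ) :
    ENNReal.ofReal (1/(((n:ℝ)+1)^4 * hatw v (rn n))) ≤
      8 * ∫⁻ s in Ioo (rn n) (rn (n+1)), ENNReal.ofReal ((1-s)^2/hatw v s) := by
  have hWpos : 0 < hatw v (rn n) := hatw_pos hv (rn_nonneg n) (rn_lt_one n)
  have hx : (0:ℝ) < (n:ℝ)+1 := by positivity
  have hx2 : (0:ℝ) < (n:ℝ)+2 := by positivity
  have hlow : ∀ s ∈ Ioo (rn n) (rn (n+1)),
      (1/((n:ℝ)+2))^2/hatw v (rn n) ≤ (1-s)^2/hatw v s := by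
    intro s hs
    have hs1 : s < 1 := hs.2.trans (rn_lt_one (n+1))
    have hsn : 0 ≤ s := (rn_nonneg n).trans hs.1.le
    have h2 : hatw v s ≤ hatw v (rn n) := hatw_anti hv (rn_nonneg n) hs.1.le hs1.le
    have h3 : 1/((n:ℝ)+2) ≤ 1 - s := by
      have := hs.2
      rw [rn_succ] at this
      linarith
    have h4 : (1/((n:ℝ)+2))^2 ≤ (1-s)^2 := by
      apply pow_le_pow_left₀ (by positivity) h3
    exact div_le_div₀ (by positivity) h4 (hatw_pos hv hsn hs1) h2
  have hl := lint_lower hlow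
  rw [rn_len n] at hl
  calc ENNReal.ofReal (1/(((n:ℝ)+1)^4 * hatw v (rn n)))
      ≤ 8 * (ENNReal.ofReal ((1/((n:ℝ)+2))^2/hatw v (rn n))
          * ENNReal.ofReal (1/((((n:ℝ)+1))*((n:ℝ)+2)))) := by
        rw [show (8:ℝ≥0∞) = ENNReal.ofReal 8 by simp,
          ← ENNReal.ofReal_mul (by positivity), ← ENNReal.ofReal_mul (by norm_num)]
        apply ENNReal.ofReal_le_ofReal
        have hrhs : 8 * ((1/((n:ℝ)+2))^2/hatw v (rn n) * (1/((((n:ℝ)+1))*((n:ℝ)+2))))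
            = 8/(hatw v (rn n) * (((n:ℝ)+1)*((n:ℝ)+2)^3)) := by
          field_simp
        rw [hrhs, div_le_div_iff₀ (by positivity) (by positivity)]
        have hcube : ((n:ℝ)+2)^3 ≤ (2*((n:ℝ)+1))^3 :=
          pow_le_pow_left₀ hx2.le (by linarith) 3
        nlinarith [mul_le_mul_of_nonneg_left hcube (mul_nonneg hWpos.le hx.le)]
  _ ≤ 8 * ∫⁻ s in Ioo (rn n) (rn (n+1)), ENNReal.ofReal ((1-s)^2/hatw v s) :=
        mul_le_mul_right hl 8

lemma sumA (F : ℝ → ℝ≥0∞) {k : ℕ} :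
    ∑ n ∈ Finset.range k, ∫⁻ s in Ioo (rn n) (rn (n+1)), F s
      ≤ ∫⁻ s in Ioo (0:ℝ) (rn k), F s := by
  classical
  set t : ℕ → Set ℝ := fun n => if n < k then Ioo (rn n) (rn (n+1)) else ∅ with ht
  have hmeas : ∀ n, MeasurableSet (t n) := fun n => by
    by_cases h : n < k <;> simp [ht, h]
  have hdisj : Pairwise (Function.onFun Disjoint t) := by
    intro i j hij
    simp only [Function.onFun, ht]
    by_cases hi : i < k
    · by_cases hj : j < k
      · simp only [if_pos hi, if_pos hj]; exact Sn_disj hij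
      · simp [if_neg hj]
    · simp [if_neg hi]
  have h0 : ∀ n ∉ Finset.range k, (∫⁻ s in t n, F s) = 0 := by
    intro n hn
    rw [Finset.mem_range] at hn
    simp [ht, hn]
  calc ∑ n ∈ Finset.range k, ∫⁻ s in Ioo (rn n) (rn (n+1)), F s
      = ∑ n ∈ Finset.range k, ∫⁻ s in t n, F s := by
        apply Finset.sum_congr rfl
        intro n hn
        rw [Finset.mem_range] at hn
        simp [ht, hn]
  _ = ∑' n, ∫⁻ s in t n, F s := (tsum_eq_sum h0).symm
  _ = ∫⁻ s in ⋃ n, t n, F s := (lintegral_iUnion hmeas hdisj F).symm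
  _ ≤ ∫⁻ s in Ioo (0:ℝ) (rn k), F s := by
      apply lintegral_mono_set
      apply Set.iUnion_subset
      intro n x hx
      by_cases h : n < k
      · simp only [ht, if_pos h] at hx
        exact ⟨lt_of_le_of_lt (rn_nonneg n) hx.1, hx.2.trans_le (rn_mono (show n+1 ≤ k by omega))⟩
      · simp [ht, if_neg h] at hx

lemma sumB (F : ℝ → ℝ≥0∞) {k : ℕ} :
    ∑' i : ℕ, ∫⁻ s in Ioo (rn (k+i)) (rn (k+i+1)), F s ≤ ∫⁻ s in Ioo (rn k) 1, F s := by
  have hmeas : ∀ i : ℕ, MeasurableSet (Ioo (rn (k+i)) (rn (k+i+1))) := fun i => measurableSet_Ioo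
  have hdisj : Pairwise (Function.onFun Disjoint fun i : ℕ => Ioo (rn (k+i)) (rn (k+i+1))) := by
    intro i j hij
    exact Sn_disj (show k+i ≠ k+j by omega)
  rw [← lintegral_iUnion hmeas hdisj F]
  apply lintegral_mono_set
  apply Set.iUnion_subset
  intro i x hx
  exact ⟨lt_of_le_of_lt (rn_mono (show k ≤ k+i by omega)) hx.1, hx.2.trans (rn_lt_one _)⟩

lemma vxodd_ge (hv : RadialWeight v) (hD1 : 1 ≤ C)
    (hD : ∀ r ∈ Set.Ico (0:ℝ) 1, hatw v r ≤ C * hatw v ((1+r)/2)) (n : ℕ) :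
    hatw v (rn n) ≤ 64*C * vx v (2*n+1) := by
  have hC0 : (0:ℝ) < C := one_pos.trans_le hD1
  have hx : (0:ℝ) < (n:ℝ)+1 := by positivity
  have hx2 : (0:ℝ) < (n:ℝ)+2 := by positivity
  set q : ℝ := rn (n+1) with hq
  have hq_eq : q = ((n:ℝ)+1)/((n:ℝ)+2) := by
    rw [hq, rn_succ]; field_simp; ring
  have hq0 : 0 ≤ q := rn_nonneg (n+1)
  have hq1 : q ≤ 1 := (rn_lt_one (n+1)).le
  -- q^(n+2) ≥ 1/8
  have hinv : (1 + 1/((n:ℝ)+1))^(n+2) ≤ 8 := by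
    have e1 : 1 + 1/((n:ℝ)+1) ≤ Real.exp (1/((n:ℝ)+1)) := by
      have := Real.add_one_le_exp (1/((n:ℝ)+1))
      linarith
    have e2 : (1 + 1/((n:ℝ)+1))^(n+2) ≤ Real.exp (1/((n:ℝ)+1))^(n+2) :=
      pow_le_pow_left₀ (by positivity) e1 _
    rw [← Real.exp_nat_mul] at e2
    have e3 : ((n+2:ℕ):ℝ) * (1/((n:ℝ)+1)) ≤ 2 := by
      push_cast
      rw [mul_one_div, div_le_iff₀ hx]
      linarith
    have e4 : Real.exp (((n+2:ℕ):ℝ) * (1/((n:ℝ)+1))) ≤ Real.exp 2 := Real.exp_le_exp.mpr e3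
    have e5 : Real.exp 2 ≤ 8 := by
      have h1 := Real.exp_one_lt_d9
      have h2 : Real.exp 2 = Real.exp 1 * Real.exp 1 := by
        rw [← Real.exp_add]; norm_num
      nlinarith [Real.exp_pos 1]
    linarith
  have hqinv : q * (1 + 1/((n:ℝ)+1)) = 1 := by
    rw [hq_eq]; field_simp; ring
  have hqpow : q^(n+2) * (1 + 1/((n:ℝ)+1))^(n+2) = 1 := by
    rw [← mul_pow, hqinv, one_pow]
  have hq8 : 1/8 ≤ q^(n+2) := by
    have hpos : (0:ℝ) < (1 + 1/((n:ℝ)+1))^(n+2) := by positivity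
    rw [div_le_iff₀ (by norm_num : (0:ℝ) < 8)]
    nlinarith [hqpow, hinv, pow_nonneg hq0 (n+2)]
  have hq64 : 1/64 ≤ q^(2*n+1) := by
    have h1 : q^(2*n+4) ≤ q^(2*n+1) := pow_le_pow_of_le_one hq0 hq1 (by omega)
    have h2 : q^(2*n+4) = (q^(n+2))^2 := by rw [← pow_mul]; congr 1; omega
    nlinarith [hq8, pow_nonneg hq0 (n+2)]
  have h1 : q^(2*n+1) * hatw v q ≤ vx v (2*n+1) := vx_ge hv _ hq0 hq1
  have h3 : hatw v (rn n) ≤ C^1 * hatw v q := by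
    apply hatw_compare hv hD1 hD 1 (rn_nonneg n) (rn_strict n).le (rn_lt_one (n+1))
    have e1 : (1:ℝ) - rn n = 1/((n:ℝ)+1) := by unfold rn; ring
    have e2 : (1:ℝ) - q = 1/((n:ℝ)+2) := by rw [hq, rn_succ]; ring
    rw [e1, e2, pow_one]
    have he : 2*(1/((n:ℝ)+2)) = 2/((n:ℝ)+2) := by ring
    rw [he, div_le_div_iff₀ hx hx2]
    linarith
  rw [pow_one] at h3
  have hH0 : 0 ≤ hatw v q := hatw_nonneg hv hq0 hq1
  have h4 : (1/64) * hatw v q ≤ q^(2*n+1) * hatw v q :=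
    mul_le_mul_of_nonneg_right hq64 hH0
  have h5 : hatw v q ≤ 64 * vx v (2*n+1) := by linarith
  have h6 : C * hatw v q ≤ C * (64 * vx v (2*n+1)) :=
    mul_le_mul_of_nonneg_left h5 hC0.le
  linarith

end S10

open S10 in
set_option maxHeartbeats 2000000 in
/-- the two-sided estimate
`Σ_{n≥1} 1/(n²(n+k+1)² v_{2n-1}) ≍ 1/((k+1)³ v_{2k})` for `k ≥ 1`. -/
theorem statement10 (v : ℝ → ℝ) (hv : RadialWeight v) (hD : DoublingD v)
    (hM1 : M1v v < ⊤) (hM2 : M2v v < ⊤) :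
    ∃ c C : ℝ, 0 < c ∧ c ≤ C ∧ ∀ k : ℕ, 1 ≤ k →
      ENNReal.ofReal (c / (((k:ℝ)+1)^3 * vx v (2*k))) ≤
        (∑' n : ℕ, ENNReal.ofReal
          (1 / (((n:ℝ)+1)^2 * (((n:ℝ)+1) + (k:ℝ) + 1)^2 * vx v (2*n+1)))) ∧
      (∑' n : ℕ, ENNReal.ofReal
          (1 / (((n:ℝ)+1)^2 * (((n:ℝ)+1) + (k:ℝ) + 1)^2 * vx v (2*n+1)))) ≤
        ENNReal.ofReal (C / (((k:ℝ)+1)^3 * vx v (2*k))) := by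
  classical
  obtain ⟨Cd, hCd1, hCd⟩ := hD
  have hCd0 : (0:ℝ) < Cd := one_pos.trans_le hCd1
  set K0 : ℝ := ∑' i : ℕ, Cd^(i+1) * Real.exp (-(2:ℝ)^(i+1)/4) with hK0def
  have hK00 : 0 ≤ K0 :=
    tsum_nonneg fun i => mul_nonneg (pow_nonneg hCd0.le _) (Real.exp_nonneg _)
  set K : ℝ := 1 + K0 with hKdef
  have hK1 : (1:ℝ) ≤ K := by simp only [hKdef]; linarith
  have hKpos : (0:ℝ) < K := by linarith
  set Eup : ℝ≥0∞ := (M1v v)^2 * ENNReal.ofReal (256*Cd^2*K)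
      + (M2v v)^2 * ENNReal.ofReal (8192*Cd*K) with hEdef
  have hEtop : Eup ≠ ⊤ := by
    simp only [hEdef]
    refine ENNReal.add_ne_top.mpr ⟨?_, ?_⟩
    · exact ENNReal.mul_ne_top (ENNReal.pow_ne_top hM1.ne) ENNReal.ofReal_ne_top
    · exact ENNReal.mul_ne_top (ENNReal.pow_ne_top hM2.ne) ENNReal.ofReal_ne_top
  refine ⟨1/36, max (1/36) Eup.toReal, by norm_num, le_max_left _ _, ?_⟩
  intro k hk
  have hkR : (1:ℝ) ≤ (k:ℝ) := by exact_mod_cast hk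
  have hkp : (0:ℝ) < (k:ℝ)+1 := by linarith
  have hvx2k : 0 < vx v (2*k) := vx_pos hv _
  set X : ℝ := ((k:ℝ)+1)^3 * vx v (2*k) with hXdef
  have hX0 : 0 < X := mul_pos (pow_pos hkp 3) hvx2k
  set f : ℕ → ℝ≥0∞ := fun n => ENNReal.ofReal
    (1 / (((n:ℝ)+1)^2 * (((n:ℝ)+1) + (k:ℝ) + 1)^2 * vx v (2*n+1))) with hfdef
  -- LOWER BOUND
  have hlower : ENNReal.ofReal (1/36 / X) ≤ ∑' n, f n := by
    refine le_trans ?_ (ENNReal.sum_le_tsum (f := f) (Finset.Icc k (2*k)))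
    have hterm : ∀ n ∈ Finset.Icc k (2*k),
        ENNReal.ofReal (1/(36*((k:ℝ)+1)^4 * vx v (2*k))) ≤ f n := by
      intro n hn
      rw [Finset.mem_Icc] at hn
      simp only [hfdef]
      apply ENNReal.ofReal_le_ofReal
      have hnk : (n:ℝ) ≤ 2*(k:ℝ) := by exact_mod_cast hn.2
      have hkn : (k:ℝ) ≤ (n:ℝ) := by exact_mod_cast hn.1
      have hvn : 0 < vx v (2*n+1) := vx_pos hv _
      have hv3 : vx v (2*n+1) ≤ vx v (2*k) := vx_anti hv (by omega)
      have h1 : ((n:ℝ)+1)^2 ≤ 4*((k:ℝ)+1)^2 := by nlinarith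
      have h2 : (((n:ℝ)+1) + (k:ℝ) + 1)^2 ≤ 9*((k:ℝ)+1)^2 := by nlinarith
      apply one_div_le_one_div_of_le
      · exact mul_pos (mul_pos (by positivity) (by positivity)) hvn
      · calc ((n:ℝ)+1)^2 * (((n:ℝ)+1) + (k:ℝ) + 1)^2 * vx v (2*n+1)
            ≤ (4*((k:ℝ)+1)^2) * (9*((k:ℝ)+1)^2) * vx v (2*k) := by
              apply mul_le_mul (mul_le_mul h1 h2 (sq_nonneg _) (by positivity)) hv3
                hvn.le (by positivity)
        _ = 36*((k:ℝ)+1)^4 * vx v (2*k) := by ring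
    have hcast : ENNReal.ofReal ((k:ℝ)+1) = ((k:ℕ):ℝ≥0∞) + 1 := by
      rw [ENNReal.ofReal_add (Nat.cast_nonneg k) zero_le_one, ENNReal.ofReal_natCast,
        ENNReal.ofReal_one]
    calc ENNReal.ofReal (1/36/X)
        = ENNReal.ofReal (((k:ℝ)+1) * (1/(36*((k:ℝ)+1)^4 * vx v (2*k)))) := by
          congr 1
          rw [hXdef]
          field_simp
    _ = (((k:ℕ):ℝ≥0∞)+1) * ENNReal.ofReal (1/(36*((k:ℝ)+1)^4 * vx v (2*k))) := by
          rw [ENNReal.ofReal_mul (by positivity), hcast]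
    _ = ∑ _n ∈ Finset.Icc k (2*k), ENNReal.ofReal (1/(36*((k:ℝ)+1)^4 * vx v (2*k))) := by
          rw [Finset.sum_const, Nat.card_Icc, show 2*k+1-k = k+1 by omega, nsmul_eq_mul]
          push_cast
          ring
    _ ≤ ∑ n ∈ Finset.Icc k (2*k), f n := Finset.sum_le_sum hterm
  -- UPPER BOUND
  set W : ℝ := hatw v (rn k) with hWdef
  have hWpos : 0 < W := hatw_pos hv (rn_nonneg k) (rn_lt_one k)
  have hρhalf : 1/2 ≤ rn k := by
    have h2 : rn 1 ≤ rn k := rn_mono hk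
    have h1 : rn 1 = 1/2 := by unfold rn; norm_num
    linarith
  have hρ0 : (0:ℝ) < rn k := lt_of_lt_of_le (by norm_num) hρhalf
  have hρ1 : rn k < 1 := rn_lt_one k
  have h1ρ : 1 - rn k = 1/((k:ℝ)+1) := by unfold rn; ring
  have hmom : ∀ n : ℕ, f n ≤ ENNReal.ofReal
      (64*Cd / ((((n:ℝ)+1)^2 * (((n:ℝ)+1) + (k:ℝ) + 1)^2) * hatw v (rn n))) := by
    intro n
    simp only [hfdef]
    apply ENNReal.ofReal_le_ofReal
    have hvn : 0 < vx v (2*n+1) := vx_pos hv _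
    have hWn : 0 < hatw v (rn n) := hatw_pos hv (rn_nonneg n) (rn_lt_one n)
    have hod := vxodd_ge hv hCd1 hCd n
    have ha : (0:ℝ) < ((n:ℝ)+1)^2 * (((n:ℝ)+1) + (k:ℝ) + 1)^2 := by positivity
    rw [show ((n:ℝ)+1)^2 * (((n:ℝ)+1) + (k:ℝ) + 1)^2 * vx v (2*n+1)
        = (((n:ℝ)+1)^2 * (((n:ℝ)+1) + (k:ℝ) + 1)^2) * vx v (2*n+1) from by ring,
      div_le_div_iff₀ (mul_pos ha hvn) (mul_pos ha hWn)]
    nlinarith [mul_le_mul_of_nonneg_left hod ha.le]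
  have hfin : ∑ n ∈ Finset.range k, f n
      ≤ (M1v v)^2 * ENNReal.ofReal (256*Cd^2/(((k:ℝ)+1)^3 * W)) := by
    have hstep : ∀ n ∈ Finset.range k, f n ≤
        ENNReal.ofReal (64*Cd/(((k:ℝ)+1)^2)) *
          (2 * ∫⁻ s in Ioo (rn n) (rn (n+1)), ENNReal.ofReal (1/hatw v s)) := by
      intro n _
      have hWn : 0 < hatw v (rn n) := hatw_pos hv (rn_nonneg n) (rn_lt_one n)
      have hb : (0:ℝ) < ((n:ℝ)+1)^2 := by positivity
      have hm : ((k:ℝ)+1)^2 ≤ (((n:ℝ)+1) + (k:ℝ) + 1)^2 := by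
        have hn0 : (0:ℝ) ≤ (n:ℝ) := Nat.cast_nonneg n
        nlinarith
      have hmpos : (0:ℝ) < (((n:ℝ)+1) + (k:ℝ) + 1)^2 := by positivity
      have h1 : f n ≤ ENNReal.ofReal
          (64*Cd/(((k:ℝ)+1)^2) * (1/(((n:ℝ)+1)^2 * hatw v (rn n)))) := by
        refine (hmom n).trans (ENNReal.ofReal_le_ofReal ?_)
        rw [show 64*Cd/(((k:ℝ)+1)^2) * (1/(((n:ℝ)+1)^2 * hatw v (rn n)))
            = 64*Cd / ((((k:ℝ)+1)^2 * ((n:ℝ)+1)^2) * hatw v (rn n)) from by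
              field_simp]
        rw [div_le_div_iff₀ (mul_pos (mul_pos hb hmpos) hWn)
          (mul_pos (mul_pos (pow_pos hkp 2) hb) hWn)]
        nlinarith [mul_le_mul_of_nonneg_left hm
          (mul_nonneg (mul_nonneg (by linarith : (0:ℝ) ≤ 64*Cd) hb.le) hWn.le)]
      refine h1.trans ?_
      rw [ENNReal.ofReal_mul (by positivity)]
      exact mul_le_mul_right (termA hv n) _
    calc ∑ n ∈ Finset.range k, f n
        ≤ ∑ n ∈ Finset.range k, ENNReal.ofReal (64*Cd/(((k:ℝ)+1)^2)) *
            (2 * ∫⁻ s in Ioo (rn n) (rn (n+1)), ENNReal.ofReal (1/hatw v s)) :=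
          Finset.sum_le_sum hstep
    _ = ENNReal.ofReal (64*Cd/(((k:ℝ)+1)^2)) * 2 *
          (∑ n ∈ Finset.range k, ∫⁻ s in Ioo (rn n) (rn (n+1)), ENNReal.ofReal (1/hatw v s)) := by
          rw [Finset.mul_sum]
          apply Finset.sum_congr rfl
          intro n _
          ring
    _ ≤ ENNReal.ofReal (64*Cd/(((k:ℝ)+1)^2)) * 2 *
          (∫⁻ s in Ioo (0:ℝ) (rn k), ENNReal.ofReal (1/hatw v s)) :=
          mul_le_mul_right (sumA _) _
    _ ≤ ENNReal.ofReal (64*Cd/(((k:ℝ)+1)^2)) * 2 *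
          ((M1v v)^2 * ENNReal.ofReal (2*Cd*(1-rn k)/W)) :=
          mul_le_mul_right (keyA hv hCd1 hCd hρ0 hρ1) _
    _ = (M1v v)^2 * (ENNReal.ofReal (64*Cd/(((k:ℝ)+1)^2)) * 2 *
          ENNReal.ofReal (2*Cd*(1-rn k)/W)) := by ring
    _ = (M1v v)^2 * ENNReal.ofReal (256*Cd^2/(((k:ℝ)+1)^3 * W)) := by
          congr 1
          rw [show (2:ℝ≥0∞) = ENNReal.ofReal 2 by simp,
            ← ENNReal.ofReal_mul (div_nonneg (by linarith) (by positivity)),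
            ← ENNReal.ofReal_mul (by positivity)]
          congr 1
          rw [h1ρ]
          field_simp
          ring
  have htailstep : ∀ i : ℕ, f (i+k) ≤ ENNReal.ofReal (64*Cd) *
      (8 * ∫⁻ s in Ioo (rn (k+i)) (rn (k+i+1)), ENNReal.ofReal ((1-s)^2/hatw v s)) := by
    intro i
    rw [show i+k = k+i from Nat.add_comm i k]
    set n := k+i with hndef
    have hWn : 0 < hatw v (rn n) := hatw_pos hv (rn_nonneg n) (rn_lt_one n)
    have hb : (0:ℝ) < ((n:ℝ)+1)^2 := by positivity
    have hm : ((n:ℝ)+1)^2 ≤ (((n:ℝ)+1) + (k:ℝ) + 1)^2 := by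
      have hk0 : (0:ℝ) ≤ (k:ℝ) := Nat.cast_nonneg k
      have hn0 : (0:ℝ) ≤ (n:ℝ) := Nat.cast_nonneg n
      nlinarith
    have hmpos : (0:ℝ) < (((n:ℝ)+1) + (k:ℝ) + 1)^2 := by positivity
    have h1 : f n ≤ ENNReal.ofReal (64*Cd * (1/(((n:ℝ)+1)^4 * hatw v (rn n)))) := by
      refine (hmom n).trans (ENNReal.ofReal_le_ofReal ?_)
      rw [show 64*Cd * (1/(((n:ℝ)+1)^4 * hatw v (rn n)))
          = 64*Cd / (((n:ℝ)+1)^4 * hatw v (rn n)) from by ring]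
      rw [div_le_div_iff₀ (mul_pos (mul_pos hb hmpos) hWn) (mul_pos (by positivity) hWn)]
      have h4 : ((n:ℝ)+1)^4 = ((n:ℝ)+1)^2 * ((n:ℝ)+1)^2 := by ring
      nlinarith [mul_le_mul_of_nonneg_left hm
        (mul_nonneg (mul_nonneg (by linarith : (0:ℝ) ≤ 64*Cd) hb.le) hWn.le)]
    refine h1.trans ?_
    rw [ENNReal.ofReal_mul (by linarith)]
    exact mul_le_mul_right (termB hv n) _
  have htail : ∑' i : ℕ, f (i+k)
      ≤ (M2v v)^2 * ENNReal.ofReal (8192*Cd/(((k:ℝ)+1)^3 * W)) := by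
    calc ∑' i : ℕ, f (i+k)
        ≤ ∑' i : ℕ, ENNReal.ofReal (64*Cd) *
            (8 * ∫⁻ s in Ioo (rn (k+i)) (rn (k+i+1)), ENNReal.ofReal ((1-s)^2/hatw v s)) :=
          ENNReal.tsum_le_tsum htailstep
    _ = ENNReal.ofReal (64*Cd) * 8 *
          ∑' i : ℕ, ∫⁻ s in Ioo (rn (k+i)) (rn (k+i+1)), ENNReal.ofReal ((1-s)^2/hatw v s) := by
          rw [← ENNReal.tsum_mul_left]
          apply tsum_congr
          intro i
          ring
    _ ≤ ENNReal.ofReal (64*Cd) * 8 *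
          ∫⁻ s in Ioo (rn k) 1, ENNReal.ofReal ((1-s)^2/hatw v s) :=
          mul_le_mul_right (sumB _) _
    _ ≤ ENNReal.ofReal (64*Cd) * 8 *
          ((M2v v)^2 * ENNReal.ofReal (16*(1-rn k)^3/W)) :=
          mul_le_mul_right (keyB hv hCd1 hρhalf hρ1) _
    _ = (M2v v)^2 * (ENNReal.ofReal (64*Cd) * 8 * ENNReal.ofReal (16*(1-rn k)^3/W)) := by ring
    _ = (M2v v)^2 * ENNReal.ofReal (8192*Cd/(((k:ℝ)+1)^3 * W)) := by
          congr 1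
          rw [show (8:ℝ≥0∞) = ENNReal.ofReal 8 by simp,
            ← ENNReal.ofReal_mul (by linarith),
            ← ENNReal.ofReal_mul (by positivity)]
          congr 1
          rw [h1ρ]
          field_simp
          ring
  have hlink : vx v (2*k) ≤ K * W := by
    have := vx_le hv hCd1 hCd hk
    simpa only [← hK0def, ← hKdef, hWdef, rn] using this
  have hWX1 : ENNReal.ofReal (256*Cd^2/(((k:ℝ)+1)^3 * W))
      ≤ ENNReal.ofReal (256*Cd^2*K) * ENNReal.ofReal (1/X) := by
    rw [← ENNReal.ofReal_mul (by positivity)]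
    apply ENNReal.ofReal_le_ofReal
    rw [mul_one_div, div_le_div_iff₀ (mul_pos (pow_pos hkp 3) hWpos) hX0, hXdef]
    nlinarith [mul_le_mul_of_nonneg_left hlink
      (by positivity : (0:ℝ) ≤ 256*Cd^2*((k:ℝ)+1)^3)]
  have hWX2 : ENNReal.ofReal (8192*Cd/(((k:ℝ)+1)^3 * W))
      ≤ ENNReal.ofReal (8192*Cd*K) * ENNReal.ofReal (1/X) := by
    rw [← ENNReal.ofReal_mul (by positivity)]
    apply ENNReal.ofReal_le_ofReal
    rw [mul_one_div, div_le_div_iff₀ (mul_pos (pow_pos hkp 3) hWpos) hX0, hXdef]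
    nlinarith [mul_le_mul_of_nonneg_left hlink
      (mul_nonneg (mul_nonneg (by norm_num : (0:ℝ) ≤ 8192) hCd0.le) (by positivity : (0:ℝ) ≤ ((k:ℝ)+1)^3))]
  have hupper : ∑' n, f n ≤ Eup * ENNReal.ofReal (1/X) := by
    have hdecomp : (∑' n, f n) = (∑ n ∈ Finset.range k, f n) + ∑' i : ℕ, f (i+k) :=
      (HasSum.sum_range_add (ENNReal.summable.hasSum (f := fun n => f (n+k)))).tsum_eq
    rw [hdecomp]
    calc (∑ n ∈ Finset.range k, f n) + ∑' i : ℕ, f (i+k)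
        ≤ (M1v v)^2 * (ENNReal.ofReal (256*Cd^2*K) * ENNReal.ofReal (1/X))
          + (M2v v)^2 * (ENNReal.ofReal (8192*Cd*K) * ENNReal.ofReal (1/X)) := by
          apply add_le_add
          · exact hfin.trans (mul_le_mul_right hWX1 _)
          · exact htail.trans (mul_le_mul_right hWX2 _)
    _ = Eup * ENNReal.ofReal (1/X) := by rw [hEdef]; ring
  refine ⟨hlower, ?_⟩
  calc (∑' n, f n) ≤ Eup * ENNReal.ofReal (1/X) := hupper
  _ = ENNReal.ofReal (Eup.toReal) * ENNReal.ofReal (1/X) := by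
      rw [ENNReal.ofReal_toReal hEtop]
  _ = ENNReal.ofReal (Eup.toReal * (1/X)) := (ENNReal.ofReal_mul ENNReal.toReal_nonneg).symm
  _ ≤ ENNReal.ofReal (max (1/36) Eup.toReal / X) := by
      apply ENNReal.ofReal_le_ofReal
      rw [mul_one_div, div_le_div_iff₀ hX0 hX0]
      nlinarith [le_max_right (1/36:ℝ) Eup.toReal, hX0]

end
end

section
/- Let v be a radial weight satisfying M₁(v) = sup_{0<r<1} (∫_r¹ v̂(s)/(1-s)² ds)^{1/2} (∫₀^r 1/v̂(s) ds)^{1/2} < ∞. Then there exists γ = γ(v) ∈ (0,1) such that ∫_{(1+r)/2}^1 v̂(s)/(1-s)² ds ≤ γ · ∫_r^1 v̂(s)/(1-s)² ds for all r ∈ (0,1). -/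
open MeasureTheory Real Set Filter

noncomputable section

/-- inequality (3.6): if `M₁(v) < ∞`, there is `γ ∈ (0,1)` with
`∫_{(1+r)/2}^1 v̂(s)/(1-s)² ds ≤ γ ∫_r^1 v̂(s)/(1-s)² ds` for all `r ∈ (0,1)`. -/
theorem statement14 (v : ℝ → ℝ) (hv : RadialWeight v) (hM1 : M1v v < ⊤) :
    ∃ γ : ℝ, 0 < γ ∧ γ < 1 ∧ ∀ r ∈ Set.Ioo (0:ℝ) 1,
      ∫⁻ s in Set.Ioo ((1+r)/2) 1, ENNReal.ofReal (hatw v s / (1-s)^2) ≤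
        ENNReal.ofReal γ * ∫⁻ s in Set.Ioo r 1, ENNReal.ofReal (hatw v s / (1-s)^2) := by
  obtain ⟨hvmeas, hvpos, hvint⟩ := hv
  -- continuity of hatw on [0,1]
  have hvIcc : MeasureTheory.IntegrableOn v (Set.Icc (0:ℝ) 1) := by
    rw [integrableOn_Icc_iff_integrableOn_Ioo]; exact hvint
  have hcont : ContinuousOn (hatw v) (Set.Icc (0:ℝ) 1) := by
    have h := intervalIntegral.continuousOn_primitive_interval_left (f := v)
      (a := (0:ℝ)) (b := 1) (μ := volume) (by rwa [Set.uIcc_of_le zero_le_one])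
    rw [Set.uIcc_of_le zero_le_one] at h
    exact h
  -- positivity of hatw on [0,1)
  have hpos : ∀ s ∈ Set.Ico (0:ℝ) 1, 0 < hatw v s := by
    intro s hs
    apply intervalIntegral.intervalIntegral_pos_of_pos_on
    · rw [intervalIntegrable_iff, Set.uIoc_of_le hs.2.le]
      exact (integrableOn_Ioc_iff_integrableOn_Ioo (by simp)).2
        (hvint.mono_set (Set.Ioo_subset_Ioo hs.1 le_rfl))
    · intro x hx; exact hvpos x ⟨hs.1.trans hx.1.le, hx.2⟩
    · exact hs.2
  -- constants
  set M : ℝ := max (M1v v).toReal 1 with hMdef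
  have hM1le : (1:ℝ) ≤ M := le_max_right _ _
  have hM1' : M1v v ≤ ENNReal.ofReal M := by
    rw [← ENNReal.ofReal_toReal hM1.ne]
    exact ENNReal.ofReal_le_ofReal (le_max_left _ _)
  set k : ℝ := 4 * M ^ 2 with hkdef
  have hk4 : (4:ℝ) ≤ k := by nlinarith
  have hk0 : (0:ℝ) < k := by linarith
  have hhalf : ∀ x : ENNReal, x ^ (1/2:ℝ) * x ^ (1/2:ℝ) = x := by
    intro x
    rw [← ENNReal.rpow_add_of_nonneg _ _ (by norm_num) (by norm_num)]
    norm_num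
  refine ⟨(k⁻¹ + 1)⁻¹, by positivity, ?_, ?_⟩
  · rw [inv_lt_one_iff₀]
    right
    have : (0:ℝ) < k⁻¹ := by positivity
    linarith
  intro r hr
  set ρ : ℝ := (1 + r) / 2 with hρdef
  have hr0 : (0:ℝ) < r := hr.1
  have hr1 : r < 1 := hr.2
  have hrρ : r < ρ := by rw [hρdef]; linarith
  have hρ1 : ρ < 1 := by rw [hρdef]; linarith
  have hρ0 : (0:ℝ) < ρ := hr0.trans hrρ
  set Φρ : ENNReal := ∫⁻ s in Set.Ioo ρ 1, ENNReal.ofReal (hatw v s / (1-s)^2) with hΦρ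
  set Φr : ENNReal := ∫⁻ s in Set.Ioo r 1, ENNReal.ofReal (hatw v s / (1-s)^2) with hΦr
  set I : ENNReal := ∫⁻ s in Set.Ioo r ρ, ENNReal.ofReal (hatw v s / (1-s)^2) with hI
  set J : ENNReal := ∫⁻ s in Set.Ioo r ρ, ENNReal.ofReal (1 / hatw v s) with hJ
  set Jρ : ENNReal := ∫⁻ s in Set.Ioo (0:ℝ) ρ, ENNReal.ofReal (1 / hatw v s) with hJρ
  -- the M₁ bound at ρ
  have hsup : Φρ ^ (1/2:ℝ) * Jρ ^ (1/2:ℝ) ≤ ENNReal.ofReal M := by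
    refine le_trans ?_ hM1'
    have := le_iSup₂ (f := fun (t : ℝ) (_ : t ∈ Set.Ioo (0:ℝ) 1) =>
      (∫⁻ s in Set.Ioo t 1, ENNReal.ofReal (hatw v s / (1-s)^2)) ^ (1/2:ℝ) *
      (∫⁻ s in Set.Ioo (0:ℝ) t, ENNReal.ofReal (1 / hatw v s)) ^ (1/2:ℝ)) ρ ⟨hρ0, hρ1⟩
    exact this
  have hMsq : Φρ * Jρ ≤ ENNReal.ofReal (M^2) := by
    calc Φρ * Jρ = (Φρ ^ (1/2:ℝ) * Jρ ^ (1/2:ℝ)) * (Φρ ^ (1/2:ℝ) * Jρ ^ (1/2:ℝ)) := by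
          rw [mul_mul_mul_comm, hhalf, hhalf]
      _ ≤ ENNReal.ofReal M * ENNReal.ofReal M := mul_le_mul' hsup hsup
      _ = ENNReal.ofReal (M^2) := by
          rw [← ENNReal.ofReal_mul (by linarith), sq]
  -- a.e. measurability of hatw on (r, ρ)
  have hwmeas : AEMeasurable (hatw v) (volume.restrict (Set.Ioo r ρ)) :=
    (hcont.mono (fun x hx => ⟨(hr0.trans hx.1).le, (hx.2.trans hρ1).le⟩)).aemeasurable
      measurableSet_Ioo
  -- Cauchy-Schwarz
  set f : ℝ → ENNReal := fun s => ENNReal.ofReal (Real.sqrt (hatw v s) * (1-s)⁻¹) with hf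
  set g : ℝ → ENNReal := fun s => ENNReal.ofReal (Real.sqrt (hatw v s))⁻¹ with hg
  have hfm : AEMeasurable f (volume.restrict (Set.Ioo r ρ)) :=
    ENNReal.measurable_ofReal.comp_aemeasurable
      (((Real.continuous_sqrt.measurable).comp_aemeasurable hwmeas).mul
        ((measurable_const.sub measurable_id).inv.aemeasurable))
  have hgm : AEMeasurable g (volume.restrict (Set.Ioo r ρ)) :=
    ENNReal.measurable_ofReal.comp_aemeasurable
      (((Real.continuous_sqrt.measurable).comp_aemeasurable hwmeas).inv)
  have hCS := ENNReal.lintegral_mul_le_Lp_mul_Lq (volume.restrict (Set.Ioo r ρ))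
    (p := 2) (q := 2) Real.HolderConjugate.two_two hfm hgm
  have hmem : ∀ s ∈ Set.Ioo r ρ, 0 < hatw v s ∧ 0 < 1 - s := by
    intro s hs
    exact ⟨hpos s ⟨(hr0.trans hs.1).le, hs.2.trans hρ1⟩, by
      have := hs.2.trans hρ1; linarith⟩
  have hfg : (∫⁻ s in Set.Ioo r ρ, ENNReal.ofReal ((1-s)⁻¹)) =
      ∫⁻ s in Set.Ioo r ρ, (f * g) s := by
    refine setLIntegral_congr_fun measurableSet_Ioo (fun s hs => ?_)
    obtain ⟨hw, hs1⟩ := hmem s hs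
    have hsq : (0:ℝ) < Real.sqrt (hatw v s) := Real.sqrt_pos.2 hw
    simp only [hf, hg, Pi.mul_apply]
    rw [← ENNReal.ofReal_mul (by positivity)]
    congr 1
    field_simp
  have hf2 : (∫⁻ s in Set.Ioo r ρ, f s ^ (2:ℝ)) = I := by
    refine setLIntegral_congr_fun measurableSet_Ioo (fun s hs => ?_)
    obtain ⟨hw, hs1⟩ := hmem s hs
    simp only [hf]
    rw [ENNReal.ofReal_rpow_of_nonneg (by positivity) (by norm_num), Real.rpow_two]
    congr 1
    rw [mul_pow, Real.sq_sqrt hw.le, inv_pow, div_eq_mul_inv]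
  have hg2 : (∫⁻ s in Set.Ioo r ρ, g s ^ (2:ℝ)) = J := by
    refine setLIntegral_congr_fun measurableSet_Ioo (fun s hs => ?_)
    obtain ⟨hw, hs1⟩ := hmem s hs
    simp only [hg]
    rw [ENNReal.ofReal_rpow_of_nonneg (by positivity) (by norm_num), Real.rpow_two]
    congr 1
    rw [inv_pow, Real.sq_sqrt hw.le, one_div]
  rw [← hfg] at hCS
  rw [hf2, hg2] at hCS
  -- lower bound of left side of Cauchy-Schwarz
  have hlow : ENNReal.ofReal (2:ℝ)⁻¹ ≤ ∫⁻ s in Set.Ioo r ρ, ENNReal.ofReal ((1-s)⁻¹) := by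
    have hconst : ENNReal.ofReal (2:ℝ)⁻¹ =
        ∫⁻ _ in Set.Ioo r ρ, ENNReal.ofReal ((1-r)⁻¹) := by
      have h1r : (0:ℝ) < 1 - r := by linarith
      rw [setLIntegral_const, Real.volume_Ioo,
        ← ENNReal.ofReal_mul (by positivity)]
      congr 1
      rw [hρdef]
      field_simp
      ring
    rw [hconst]
    refine setLIntegral_mono' measurableSet_Ioo (fun s hs => ?_)
    obtain ⟨hw, hs1⟩ := hmem s hs
    apply ENNReal.ofReal_le_ofReal
    apply inv_anti₀ hs1
    linarith [hs.1]
  have h12 : ENNReal.ofReal (2:ℝ)⁻¹ ≤ I ^ (1/2:ℝ) * J ^ (1/2:ℝ) := hlow.trans hCS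
  have h14 : ENNReal.ofReal (4:ℝ)⁻¹ ≤ I * J := by
    calc ENNReal.ofReal (4:ℝ)⁻¹
        = ENNReal.ofReal (2:ℝ)⁻¹ * ENNReal.ofReal (2:ℝ)⁻¹ := by
          rw [← ENNReal.ofReal_mul (by norm_num)]; norm_num
      _ ≤ (I ^ (1/2:ℝ) * J ^ (1/2:ℝ)) * (I ^ (1/2:ℝ) * J ^ (1/2:ℝ)) := mul_le_mul' h12 h12
      _ = I * J := by rw [mul_mul_mul_comm, hhalf, hhalf]
  have hJJρ : J ≤ Jρ := lintegral_mono_set (Set.Ioo_subset_Ioo hr0.le le_rfl)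
  have h14ρ : ENNReal.ofReal (4:ℝ)⁻¹ ≤ I * Jρ := h14.trans (mul_le_mul_right hJJρ I)
  -- Φρ ≤ k * I
  have hΦI : Φρ ≤ ENNReal.ofReal k * I := by
    have h2 : Φρ * ENNReal.ofReal (4:ℝ)⁻¹ ≤ I * ENNReal.ofReal (M^2) := by
      calc Φρ * ENNReal.ofReal (4:ℝ)⁻¹ ≤ Φρ * (I * Jρ) := mul_le_mul_right h14ρ Φρ
        _ = I * (Φρ * Jρ) := by ring
        _ ≤ I * ENNReal.ofReal (M^2) := mul_le_mul_right hMsq I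
    have h3 := mul_le_mul_left h2 (ENNReal.ofReal (4:ℝ))
    rw [mul_assoc, ← ENNReal.ofReal_mul (by norm_num)] at h3
    norm_num at h3
    have h4 : ENNReal.ofReal (M^2) * 4 = ENNReal.ofReal k := by
      rw [hkdef, ENNReal.ofReal_mul (by norm_num : (0:ℝ) ≤ 4), ENNReal.ofReal_ofNat, mul_comm]
    calc Φρ ≤ I * ENNReal.ofReal (M^2) * 4 := h3
      _ = ENNReal.ofReal k * I := by rw [mul_assoc, h4, mul_comm]
  have hIlow : ENNReal.ofReal k⁻¹ * Φρ ≤ I := by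
    calc ENNReal.ofReal k⁻¹ * Φρ ≤ ENNReal.ofReal k⁻¹ * (ENNReal.ofReal k * I) :=
          mul_le_mul_right hΦI _
      _ = (ENNReal.ofReal k⁻¹ * ENNReal.ofReal k) * I := (mul_assoc _ _ _).symm
      _ = I := by
          rw [← ENNReal.ofReal_mul (by positivity), inv_mul_cancel₀ hk0.ne',
            ENNReal.ofReal_one, one_mul]
  -- decomposition
  have hdecomp : I + Φρ ≤ Φr := by
    have hIoc : (∫⁻ s in Set.Ioc r ρ, ENNReal.ofReal (hatw v s / (1-s)^2)) = I :=
      (setLIntegral_congr (Ioo_ae_eq_Ioc (a := r) (b := ρ))).symm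
    have hdisj : Disjoint (Set.Ioc r ρ) (Set.Ioo ρ 1) := by
      rw [Set.disjoint_left]
      rintro x ⟨_, h1⟩ ⟨h2, _⟩
      exact absurd h2 (not_lt.2 h1)
    calc I + Φρ
        = (∫⁻ s in Set.Ioc r ρ, ENNReal.ofReal (hatw v s / (1-s)^2)) +
          (∫⁻ s in Set.Ioo ρ 1, ENNReal.ofReal (hatw v s / (1-s)^2)) := by rw [hIoc]
      _ = ∫⁻ s in Set.Ioc r ρ ∪ Set.Ioo ρ 1, ENNReal.ofReal (hatw v s / (1-s)^2) :=
          (lintegral_union measurableSet_Ioo hdisj).symm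
      _ ≤ Φr := le_of_eq (by rw [Set.Ioc_union_Ioo_eq_Ioo hrρ.le hρ1])
  -- conclusion
  have hfinal : ENNReal.ofReal (k⁻¹ + 1) * Φρ ≤ Φr := by
    calc ENNReal.ofReal (k⁻¹ + 1) * Φρ
        = ENNReal.ofReal k⁻¹ * Φρ + Φρ := by
          rw [ENNReal.ofReal_add (by positivity) zero_le_one, ENNReal.ofReal_one,
            add_mul, one_mul]
      _ ≤ I + Φρ := add_le_add_left hIlow Φρ
      _ ≤ Φr := hdecomp
  calc Φρ = ENNReal.ofReal (k⁻¹+1)⁻¹ * (ENNReal.ofReal (k⁻¹ + 1) * Φρ) := by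
        rw [← mul_assoc, ← ENNReal.ofReal_mul (by positivity),
          inv_mul_cancel₀ (by positivity), ENNReal.ofReal_one, one_mul]
    _ ≤ ENNReal.ofReal (k⁻¹+1)⁻¹ * Φr := mul_le_mul_right hfinal _

end
end
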